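/- arXiv:1712.09477 — 4 statements merged into one kernel-verified Lean document; each statement's English description precedes it below -/
import Mathlib

section
/- Let G be a finite simple connected graph whose set V₁ of degree-1 vertices is nonempty, say V₁ = {v₁,...,v_i}. Form the graph G ⊕ V₁' by adding new vertices v₁',...,v_i' and new edges v₁v₁',...,v_iv_i' (attaching one pendant edge to each leaf of G). If G is strongly antimagic, then G ⊕ V₁' is strongly antimagic. -/
open Classical

noncomputable section

/-- The vertex sum at `u` of an edge labeling `f`: the sum of the labels of the
edges incident to `u`. -/
def vertexSum {V : Type*} [Fintype V] (G : SimpleGraph V) (f : Sym2 V → ℕ) (u : V) : ℕ :=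
  ∑ e ∈ G.incidenceFinset u, f e

/-- `f` is an antimagic labeling of `G`: it is a bijection from the edge set of `G`
onto `{1, …, |E|}` and the vertex sums are pairwise distinct. -/
def IsAntimagicLabeling {V : Type*} [Fintype V] (G : SimpleGraph V)
    (f : Sym2 V → ℕ) : Prop :=
  Set.BijOn f G.edgeSet (Set.Icc 1 G.edgeFinset.card) ∧
  Function.Injective (vertexSum G f)

/-- `f` is a strongly antimagic labeling of `G`: it is an antimagic labeling and moreover
`deg u < deg v` implies `vertexSum u < vertexSum v`. -/
def IsStronglyAntimagicLabeling {V : Type*} [Fintype V] (G : SimpleGraph V)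
    (f : Sym2 V → ℕ) : Prop :=
  Set.BijOn f G.edgeSet (Set.Icc 1 G.edgeFinset.card) ∧
  Function.Injective (vertexSum G f) ∧
  ∀ u v : V, G.degree u < G.degree v → vertexSum G f u < vertexSum G f v

/-- `G` is antimagic if it admits an antimagic labeling. -/
def IsAntimagic {V : Type*} [Fintype V] (G : SimpleGraph V) : Prop :=
  ∃ f : Sym2 V → ℕ, IsAntimagicLabeling G f

/-- `G` is strongly antimagic if it admits a strongly antimagic labeling. -/
def IsStronglyAntimagic {V : Type*} [Fintype V] (G : SimpleGraph V) : Prop :=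
  ∃ f : Sym2 V → ℕ, IsStronglyAntimagicLabeling G f

/-- `G ⊕ V₁'`: the graph obtained from `G` by adding, for each vertex `v` of degree `1`,
a new vertex `v'` and a new pendant edge `v v'`. -/
def attachLeaves {V : Type*} [Fintype V] (G : SimpleGraph V) :
    SimpleGraph (V ⊕ {v : V // G.degree v = 1}) :=
  SimpleGraph.fromRel fun x y =>
    (∃ a b : V, x = Sum.inl a ∧ y = Sum.inl b ∧ G.Adj a b) ∨
    (∃ a : {v : V // G.degree v = 1}, x = Sum.inl a.1 ∧ y = Sum.inr a)

lemma mem_incidenceFinset' {α : Type*} (G : SimpleGraph α) (v : α) (e : Sym2 α)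
    (i : Fintype (G.neighborSet v)) (d : DecidableEq α) :
    e ∈ @SimpleGraph.incidenceFinset _ G v i d ↔ e ∈ G.incidenceSet v :=
  Set.mem_toFinset

section Aux

variable {V : Type*} [Fintype V] (G : SimpleGraph V) (f : Sym2 V → ℕ)

/-- rank of a leaf among all leaves, ordered by vertex sum. -/
def leafRank (w : {v : V // G.degree v = 1}) : ℕ :=
  (Finset.univ.filter fun u : {v : V // G.degree v = 1} =>
    vertexSum G f u.1 ≤ vertexSum G f w.1).card

/-- the new labeling on `G ⊕ V₁'`. -/
def attachLabel : Sym2 (V ⊕ {v : V // G.degree v = 1}) → ℕ :=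
  Sym2.lift ⟨fun x y =>
    match x, y with
    | Sum.inl a, Sum.inl b => f s(a, b) + Fintype.card {v : V // G.degree v = 1}
    | Sum.inl a, Sum.inr w => if a = w.1 then leafRank G f w else 0
    | Sum.inr w, Sum.inl a => if a = w.1 then leafRank G f w else 0
    | Sum.inr _, Sum.inr _ => 0,
   by
    intro x y
    rcases x with a | w <;> rcases y with b | w'
    · show f s(a, b) + _ = f s(b, a) + _
      rw [Sym2.eq_swap]
    · rfl
    · rfl
    · rfl⟩

lemma attachLabel_map (e : Sym2 V) :
    attachLabel G f (Sym2.map Sum.inl e) =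
      f e + Fintype.card {v : V // G.degree v = 1} := by
  induction e with
  | _ x y => rw [Sym2.map_pair_eq]; rfl

lemma attachLabel_pendant (w : {v : V // G.degree v = 1}) :
    attachLabel G f s(Sum.inl w.1, Sum.inr w) = leafRank G f w := by
  show (if w.1 = w.1 then leafRank G f w else 0) = _
  simp

lemma attach_adj (x y : V ⊕ {v : V // G.degree v = 1}) :
    (attachLeaves G).Adj x y ↔
      (∃ a b : V, x = Sum.inl a ∧ y = Sum.inl b ∧ G.Adj a b) ∨
      (∃ w : {v : V // G.degree v = 1}, x = Sum.inl w.1 ∧ y = Sum.inr w) ∨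
      (∃ w : {v : V // G.degree v = 1}, x = Sum.inr w ∧ y = Sum.inl w.1) := by
  show x ≠ y ∧ _ ↔ _
  constructor
  · rintro ⟨hne, h | h⟩
    · rcases h with (⟨a, b, rfl, rfl, hab⟩ | ⟨w, rfl, rfl⟩)
      · exact Or.inl ⟨a, b, rfl, rfl, hab⟩
      · exact Or.inr (Or.inl ⟨w, rfl, rfl⟩)
    · rcases h with (⟨a, b, rfl, rfl, hab⟩ | ⟨w, rfl, rfl⟩)
      · exact Or.inl ⟨b, a, rfl, rfl, hab.symm⟩
      · exact Or.inr (Or.inr ⟨w, rfl, rfl⟩)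
  · rintro (⟨a, b, rfl, rfl, hab⟩ | ⟨w, rfl, rfl⟩ | ⟨w, rfl, rfl⟩)
    · exact ⟨by simp [hab.ne], Or.inl (Or.inl ⟨a, b, rfl, rfl, hab⟩)⟩
    · exact ⟨by simp, Or.inl (Or.inr ⟨w, rfl, rfl⟩)⟩
    · exact ⟨by simp, Or.inr (Or.inr ⟨w, rfl, rfl⟩)⟩

lemma pendant_ne_map (a : V) (w : {v : V // G.degree v = 1}) (e : Sym2 V) :
    s(Sum.inl a, Sum.inr w) ≠ Sym2.map Sum.inl e := by
  intro h
  have : (Sum.inr w : V ⊕ {v : V // G.degree v = 1}) ∈ Sym2.map Sum.inl e := by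
    rw [← h]; simp
  rw [Sym2.mem_map] at this
  obtain ⟨b, _, hb⟩ := this
  exact Sum.inl_ne_inr hb

lemma attach_incidence_inr (w : {v : V // G.degree v = 1})
    (inst : Fintype ((attachLeaves G).neighborSet (Sum.inr w)))
    (dec : DecidableEq (V ⊕ {v : V // G.degree v = 1})) :
    @SimpleGraph.incidenceFinset _ (attachLeaves G) (Sum.inr w) inst dec
      = {s(Sum.inl w.1, Sum.inr w)} := by
  ext e
  induction e with
  | _ x y =>
    rw [mem_incidenceFinset', SimpleGraph.mk'_mem_incidenceSet_iff,
      attach_adj, Finset.mem_singleton]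
    constructor
    · rintro ⟨(⟨a, b, rfl, rfl, -⟩ | ⟨w', rfl, rfl⟩ | ⟨w', rfl, rfl⟩), h2⟩
      · rcases h2 with h2 | h2 <;> exact absurd h2 (by simp)
      · rcases h2 with h2 | h2
        · exact absurd h2 (by simp)
        · obtain rfl : w = w' := by simpa using h2
          rfl
      · rcases h2 with h2 | h2
        · obtain rfl : w = w' := by simpa using h2
          exact Sym2.eq_swap
        · exact absurd h2 (by simp)
    · intro h
      rw [Sym2.eq_iff] at h
      rcases h with ⟨rfl, rfl⟩ | ⟨rfl, rfl⟩
      · exact ⟨Or.inr (Or.inl ⟨w, rfl, rfl⟩), Or.inr rfl⟩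
      · exact ⟨Or.inr (Or.inr ⟨w, rfl, rfl⟩), Or.inl rfl⟩

lemma attach_disj (d : DecidableEq (Sym2 (V ⊕ {v : V // G.degree v = 1}))) (a : V) :
    Disjoint (@Finset.image _ _ d (Sym2.map Sum.inl) (G.incidenceFinset a))
      (if h : G.degree a = 1 then
        ({s(Sum.inl a, Sum.inr ⟨a, h⟩)} :
          Finset (Sym2 (V ⊕ {v : V // G.degree v = 1}))) else ∅) := by
  split_ifs with h
  · rw [Finset.disjoint_singleton_right]
    intro hmem
    rw [Finset.mem_image] at hmem
    obtain ⟨e, -, he⟩ := hmem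
    exact pendant_ne_map G a ⟨a, h⟩ e he.symm
  · simp

lemma attach_incidence_inl (a : V)
    (inst : Fintype ((attachLeaves G).neighborSet (Sum.inl a)))
    (dec : DecidableEq (V ⊕ {v : V // G.degree v = 1})) :
    @SimpleGraph.incidenceFinset _ (attachLeaves G) (Sum.inl a) inst dec =
      ((G.incidenceFinset a).image (Sym2.map Sum.inl)).disjUnion
      (if h : G.degree a = 1 then {s(Sum.inl a, Sum.inr ⟨a, h⟩)} else ∅)
      (attach_disj G _ a) := by
  ext e
  induction e with
  | _ x y =>
    rw [mem_incidenceFinset', SimpleGraph.mk'_mem_incidenceSet_iff,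
      attach_adj, Finset.mem_disjUnion, Finset.mem_image]
    constructor
    · rintro ⟨(⟨c, b, rfl, rfl, hcb⟩ | ⟨w', rfl, rfl⟩ | ⟨w', rfl, rfl⟩), h2⟩
      · refine Or.inl ⟨s(c, b), ?_, by rw [Sym2.map_pair_eq]⟩
        rw [SimpleGraph.mem_incidenceFinset, SimpleGraph.mk'_mem_incidenceSet_iff]
        refine ⟨hcb, ?_⟩
        rcases h2 with h2 | h2
        · exact Or.inl (by simpa using h2)
        · exact Or.inr (by simpa using h2)
      · obtain rfl : a = w'.1 := by
          rcases h2 with h2 | h2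
          · simpa using h2
          · exact absurd h2 (by simp)
        refine Or.inr ?_
        rw [dif_pos w'.2]
        simp
      · obtain rfl : a = w'.1 := by
          rcases h2 with h2 | h2
          · exact absurd h2 (by simp)
          · simpa using h2
        refine Or.inr ?_
        rw [dif_pos w'.2, Finset.mem_singleton]
        exact Sym2.eq_swap
    · rintro (⟨e', he', hmap⟩ | h)
      · induction e' with
        | _ c d =>
          rw [SimpleGraph.mem_incidenceFinset, SimpleGraph.mk'_mem_incidenceSet_iff] at he'
          rw [Sym2.map_pair_eq, Sym2.eq_iff] at hmap
          obtain ⟨hcd, ha⟩ := he'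
          rcases hmap with ⟨rfl, rfl⟩ | ⟨rfl, rfl⟩
          · refine ⟨Or.inl ⟨c, d, rfl, rfl, hcd⟩, ?_⟩
            rcases ha with rfl | rfl
            · exact Or.inl rfl
            · exact Or.inr rfl
          · refine ⟨Or.inl ⟨d, c, rfl, rfl, hcd.symm⟩, ?_⟩
            rcases ha with rfl | rfl
            · exact Or.inr rfl
            · exact Or.inl rfl
      · by_cases hd : G.degree a = 1
        · rw [dif_pos hd, Finset.mem_singleton, Sym2.eq_iff] at h
          rcases h with ⟨rfl, rfl⟩ | ⟨rfl, rfl⟩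
          · exact ⟨Or.inr (Or.inl ⟨⟨a, hd⟩, rfl, rfl⟩), Or.inl rfl⟩
          · exact ⟨Or.inr (Or.inr ⟨⟨a, hd⟩, rfl, rfl⟩), Or.inr rfl⟩
        · rw [dif_neg hd] at h
          exact absurd h (Finset.notMem_empty _)


lemma attach_degree_inr (w : {v : V // G.degree v = 1})
    (inst : Fintype ((attachLeaves G).neighborSet (Sum.inr w))) :
    @SimpleGraph.degree _ (attachLeaves G) (Sum.inr w) inst = 1 := by
  rw [← SimpleGraph.card_incidenceFinset_eq_degree, attach_incidence_inr]
  simp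

lemma attach_degree_inl (a : V)
    (inst : Fintype ((attachLeaves G).neighborSet (Sum.inl a))) :
    @SimpleGraph.degree _ (attachLeaves G) (Sum.inl a) inst =
      G.degree a + (if G.degree a = 1 then 1 else 0) := by
  rw [← SimpleGraph.card_incidenceFinset_eq_degree, attach_incidence_inl,
    Finset.card_disjUnion,
    Finset.card_image_of_injective _ (Sym2.map.injective Sum.inl_injective),
    SimpleGraph.card_incidenceFinset_eq_degree]
  congr 1
  split_ifs <;> simp

lemma sum_image'' {α β M : Type*} [AddCommMonoid M] (d : DecidableEq β) {s : Finset α}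
    {g : α → β} (h : ∀ x ∈ s, ∀ y ∈ s, g x = g y → x = y) (F : β → M) :
    ∑ x ∈ @Finset.image _ _ d g s, F x = ∑ x ∈ s, F (g x) :=
  Finset.sum_image h

lemma attach_vsum_inr (w : {v : V // G.degree v = 1}) :
    vertexSum (attachLeaves G) (attachLabel G f) (Sum.inr w) = leafRank G f w := by
  unfold vertexSum
  rw [attach_incidence_inr, Finset.sum_singleton, attachLabel_pendant]

lemma attach_vsum_inl (a : V) :
    vertexSum (attachLeaves G) (attachLabel G f) (Sum.inl a) =
      vertexSum G f a + Fintype.card {v : V // G.degree v = 1} * G.degree a +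
      (if h : G.degree a = 1 then leafRank G f ⟨a, h⟩ else 0) := by
  unfold vertexSum
  rw [attach_incidence_inl, Finset.sum_disjUnion,
    sum_image'' _ (fun e _ e' _ h => Sym2.map.injective Sum.inl_injective h)]
  have h1 : ∑ e ∈ G.incidenceFinset a, attachLabel G f (Sym2.map Sum.inl e) =
      (∑ e ∈ G.incidenceFinset a, f e) +
        Fintype.card {v : V // G.degree v = 1} * G.degree a := by
    rw [Finset.sum_congr rfl (fun e _ => attachLabel_map G f e), Finset.sum_add_distrib,
      Finset.sum_const, smul_eq_mul, SimpleGraph.card_incidenceFinset_eq_degree]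
    ring
  rw [h1]
  congr 1
  split_ifs with h
  · rw [Finset.sum_singleton]
    exact attachLabel_pendant G f ⟨a, h⟩
  · exact Finset.sum_empty

lemma attach_edgeSet' (e : Sym2 (V ⊕ {v : V // G.degree v = 1})) :
    e ∈ (attachLeaves G).edgeSet ↔
      (∃ e' ∈ G.edgeSet, Sym2.map Sum.inl e' = e) ∨
      (∃ w : {v : V // G.degree v = 1}, s(Sum.inl w.1, Sum.inr w) = e) := by
  induction e with
  | _ x y =>
    rw [SimpleGraph.mem_edgeSet, attach_adj]
    constructor
    · rintro (⟨a, b, rfl, rfl, hab⟩ | ⟨w, rfl, rfl⟩ | ⟨w, rfl, rfl⟩)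
      · exact Or.inl ⟨s(a, b), (SimpleGraph.mem_edgeSet G).2 hab, by rw [Sym2.map_pair_eq]⟩
      · exact Or.inr ⟨w, rfl⟩
      · exact Or.inr ⟨w, Sym2.eq_swap⟩
    · rintro (⟨e', he', hmap⟩ | ⟨w, hw⟩)
      · induction e' with
        | _ c d =>
          rw [SimpleGraph.mem_edgeSet] at he'
          rw [Sym2.map_pair_eq, Sym2.eq_iff] at hmap
          rcases hmap with ⟨rfl, rfl⟩ | ⟨rfl, rfl⟩
          · exact Or.inl ⟨c, d, rfl, rfl, he'⟩
          · exact Or.inl ⟨d, c, rfl, rfl, he'.symm⟩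
      · rw [Sym2.eq_iff] at hw
        rcases hw with ⟨rfl, rfl⟩ | ⟨rfl, rfl⟩
        · exact Or.inr (Or.inl ⟨w, rfl, rfl⟩)
        · exact Or.inr (Or.inr ⟨w, rfl, rfl⟩)

lemma pendant_inj : Function.Injective
    (fun w : {v : V // G.degree v = 1} => s(Sum.inl w.1, Sum.inr w)) := by
  intro w u h
  simp only [Sym2.eq_iff] at h
  rcases h with ⟨-, h2⟩ | ⟨h1, -⟩
  · exact Sum.inr_injective h2
  · exact absurd h1 (by simp)

lemma attach_edgeFinset (inst : Fintype (attachLeaves G).edgeSet) :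
    @SimpleGraph.edgeFinset _ (attachLeaves G) inst =
      G.edgeFinset.image (Sym2.map Sum.inl) ∪
      Finset.univ.image
        (fun w : {v : V // G.degree v = 1} => s(Sum.inl w.1, Sum.inr w)) := by
  ext e
  rw [SimpleGraph.mem_edgeFinset, attach_edgeSet', Finset.mem_union,
    Finset.mem_image, Finset.mem_image]
  constructor
  · rintro (⟨e', he', rfl⟩ | ⟨w, rfl⟩)
    · exact Or.inl ⟨e', SimpleGraph.mem_edgeFinset.2 he', rfl⟩
    · exact Or.inr ⟨w, Finset.mem_univ _, rfl⟩
  · rintro (⟨e', he', rfl⟩ | ⟨w, -, rfl⟩)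
    · exact Or.inl ⟨e', SimpleGraph.mem_edgeFinset.1 he', rfl⟩
    · exact Or.inr ⟨w, rfl⟩

lemma attach_card (inst : Fintype (attachLeaves G).edgeSet) :
    (@SimpleGraph.edgeFinset _ (attachLeaves G) inst).card =
      G.edgeFinset.card + Fintype.card {v : V // G.degree v = 1} := by
  rw [attach_edgeFinset, Finset.card_union_of_disjoint,
    Finset.card_image_of_injective _ (Sym2.map.injective Sum.inl_injective),
    Finset.card_image_of_injective _ (pendant_inj G), Finset.card_univ]
  rw [Finset.disjoint_left]
  intro x hx hx'
  rw [Finset.mem_image] at hx hx'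
  obtain ⟨e, -, rfl⟩ := hx
  obtain ⟨w, -, hw⟩ := hx'
  exact pendant_ne_map G w.1 w e hw

lemma leafRank_lt {u w : {v : V // G.degree v = 1}}
    (h : vertexSum G f u.1 < vertexSum G f w.1) :
    leafRank G f u < leafRank G f w := by
  apply Finset.card_lt_card
  have hsub : (Finset.univ.filter fun x : {v : V // G.degree v = 1} =>
      vertexSum G f x.1 ≤ vertexSum G f u.1) ⊆
      Finset.univ.filter fun x => vertexSum G f x.1 ≤ vertexSum G f w.1 := by
    intro x hx
    rw [Finset.mem_filter] at hx ⊢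
    exact ⟨hx.1, le_trans hx.2 h.le⟩
  rw [Finset.ssubset_iff_of_subset hsub]
  exact ⟨w, Finset.mem_filter.2 ⟨Finset.mem_univ _, le_refl _⟩,
    fun hc => absurd (Finset.mem_filter.1 hc).2 (not_le.2 h)⟩

lemma leafRank_inj (hinj : Function.Injective (vertexSum G f)) :
    Function.Injective (leafRank G f) := by
  intro u w h
  by_contra hne
  have hs : vertexSum G f u.1 ≠ vertexSum G f w.1 := by
    intro he
    exact hne (Subtype.ext (hinj he))
  rcases lt_or_gt_of_ne hs with hlt | hlt
  · exact absurd h (ne_of_lt (leafRank_lt G f hlt))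
  · exact absurd h.symm (ne_of_lt (leafRank_lt G f hlt))

lemma one_le_leafRank (w : {v : V // G.degree v = 1}) : 1 ≤ leafRank G f w :=
  Finset.card_pos.2 ⟨w, Finset.mem_filter.2 ⟨Finset.mem_univ _, le_refl _⟩⟩

lemma leafRank_le (w : {v : V // G.degree v = 1}) :
    leafRank G f w ≤ Fintype.card {v : V // G.degree v = 1} :=
  le_trans (Finset.card_filter_le _ _) (le_of_eq (Finset.card_univ))

lemma leafRank_surj (hinj : Function.Injective (vertexSum G f)) (k : ℕ)
    (h1 : 1 ≤ k) (h2 : k ≤ Fintype.card {v : V // G.degree v = 1}) :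
    ∃ w, leafRank G f w = k := by
  have himg : Finset.univ.image (leafRank G f) =
      Finset.Icc 1 (Fintype.card {v : V // G.degree v = 1}) := by
    apply Finset.eq_of_subset_of_card_le
    · intro x hx
      rw [Finset.mem_image] at hx
      obtain ⟨w, -, rfl⟩ := hx
      rw [Finset.mem_Icc]
      exact ⟨one_le_leafRank G f w, leafRank_le G f w⟩
    · rw [Nat.card_Icc, Finset.card_image_of_injective _ (leafRank_inj G f hinj),
        Finset.card_univ]
      omega
  have : k ∈ Finset.univ.image (leafRank G f) := by
    rw [himg, Finset.mem_Icc]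
    exact ⟨h1, h2⟩
  rw [Finset.mem_image] at this
  obtain ⟨w, -, hw⟩ := this
  exact ⟨w, hw⟩

lemma vsum_zero (a : V) (h : G.degree a = 0) : vertexSum G f a = 0 := by
  unfold vertexSum
  have he : G.incidenceFinset a = ∅ := Finset.card_eq_zero.1
    (by rw [SimpleGraph.card_incidenceFinset_eq_degree]; exact h)
  rw [he, Finset.sum_empty]

end Aux

/-- If `G` is a finite simple connected graph with a nonempty set of
degree-1 vertices and `G` is strongly antimagic, then the graph `G ⊕ V₁'` obtained by
attaching one pendant edge to each leaf of `G` is strongly antimagic. -/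
theorem attachLeaves_isStronglyAntimagic {V : Type*} [Fintype V] (G : SimpleGraph V)
    (hconn : G.Connected) (hne : ∃ v : V, G.degree v = 1)
    (h : IsStronglyAntimagic G) :
    IsStronglyAntimagic (attachLeaves G) := by
  obtain ⟨f, hbij, hinj, hmono⟩ := h
  have hi1 : 1 ≤ Fintype.card {v : V // G.degree v = 1} := by
    obtain ⟨v, hv⟩ := hne
    exact Fintype.card_pos_iff.2 ⟨⟨v, hv⟩⟩
  refine ⟨attachLabel G f, ?_, ?_, ?_⟩
  · -- BijOn
    rw [attach_card G]
    refine ⟨?_, ?_, ?_⟩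
    · -- MapsTo
      intro e he
      rw [Set.mem_Icc]
      rcases (attach_edgeSet' G e).1 he with ⟨e', he', rfl⟩ | ⟨w, rfl⟩
      · rw [attachLabel_map]
        obtain ⟨h1, h2⟩ := Set.mem_Icc.1 (hbij.1 he')
        omega
      · rw [attachLabel_pendant]
        have h1 := one_le_leafRank G f w
        have h2 := leafRank_le G f w
        omega
    · -- InjOn
      intro e1 h1 e2 h2 heq
      rcases (attach_edgeSet' G e1).1 h1 with ⟨a', ha', rfl⟩ | ⟨w, rfl⟩ <;>
        rcases (attach_edgeSet' G e2).1 h2 with ⟨b', hb', rfl⟩ | ⟨u, rfl⟩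
      · rw [attachLabel_map, attachLabel_map] at heq
        rw [hbij.2.1 ha' hb' (by omega)]
      · exfalso
        rw [attachLabel_map, attachLabel_pendant] at heq
        have hf1 := (Set.mem_Icc.1 (hbij.1 ha')).1
        have hr := leafRank_le G f u
        omega
      · exfalso
        rw [attachLabel_pendant, attachLabel_map] at heq
        have hf1 := (Set.mem_Icc.1 (hbij.1 hb')).1
        have hr := leafRank_le G f w
        omega
      · rw [attachLabel_pendant, attachLabel_pendant] at heq
        rw [leafRank_inj G f hinj heq]
    · -- SurjOn
      intro k hk
      rw [Set.mem_Icc] at hk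
      by_cases hk2 : k ≤ Fintype.card {v : V // G.degree v = 1}
      · obtain ⟨w, hw⟩ := leafRank_surj G f hinj k hk.1 hk2
        exact ⟨s(Sum.inl w.1, Sum.inr w), (attach_edgeSet' G _).2 (Or.inr ⟨w, rfl⟩),
          by rw [attachLabel_pendant]; exact hw⟩
      · push_neg at hk2
        have hmem : (k - Fintype.card {v : V // G.degree v = 1}) ∈
            Set.Icc 1 G.edgeFinset.card := Set.mem_Icc.2 ⟨by omega, by omega⟩
        obtain ⟨e, he, hfe⟩ := hbij.2.2 hmem
        refine ⟨Sym2.map Sum.inl e, (attach_edgeSet' G _).2 (Or.inl ⟨e, he, rfl⟩), ?_⟩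
        rw [attachLabel_map, hfe]
        omega
  · -- Injective vertexSum
    intro u v huv
    rcases u with a | w <;> rcases v with b | u'
    · rw [attach_vsum_inl, attach_vsum_inl] at huv
      by_cases ha : G.degree a = 1 <;> by_cases hb : G.degree b = 1
      · rw [dif_pos ha, dif_pos hb, ha, hb] at huv
        rcases lt_trichotomy (vertexSum G f a) (vertexSum G f b) with hc | hc | hc
        · exfalso
          have := leafRank_lt G f (u := ⟨a, ha⟩) (w := ⟨b, hb⟩) hc
          omega
        · exact congrArg Sum.inl (hinj hc)
        · exfalso
          have := leafRank_lt G f (u := ⟨b, hb⟩) (w := ⟨a, ha⟩) hc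
          omega
      · exfalso
        rw [dif_pos ha, dif_neg hb, ha] at huv
        have hr1 := one_le_leafRank G f ⟨a, ha⟩
        have hr2 := leafRank_le G f ⟨a, ha⟩
        rcases Nat.eq_zero_or_pos (G.degree b) with hb0 | hbpos
        · rw [vsum_zero G f b hb0, hb0] at huv
          omega
        · have hφ : vertexSum G f a < vertexSum G f b := hmono a b (by omega)
          have hm : Fintype.card {v : V // G.degree v = 1} * 2 ≤
              Fintype.card {v : V // G.degree v = 1} * G.degree b :=
            Nat.mul_le_mul_left _ (by omega)
          omega
      · exfalso
        rw [dif_neg ha, dif_pos hb, hb] at huv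
        have hr1 := one_le_leafRank G f ⟨b, hb⟩
        have hr2 := leafRank_le G f ⟨b, hb⟩
        rcases Nat.eq_zero_or_pos (G.degree a) with ha0 | hapos
        · rw [vsum_zero G f a ha0, ha0] at huv
          omega
        · have hφ : vertexSum G f b < vertexSum G f a := hmono b a (by omega)
          have hm : Fintype.card {v : V // G.degree v = 1} * 2 ≤
              Fintype.card {v : V // G.degree v = 1} * G.degree a :=
            Nat.mul_le_mul_left _ (by omega)
          omega
      · rw [dif_neg ha, dif_neg hb] at huv
        rcases lt_trichotomy (G.degree a) (G.degree b) with hc | hc | hc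
        · exfalso
          have hφ := hmono a b hc
          have hm : Fintype.card {v : V // G.degree v = 1} * G.degree a ≤
              Fintype.card {v : V // G.degree v = 1} * G.degree b :=
            Nat.mul_le_mul_left _ hc.le
          omega
        · rw [hc] at huv
          have : vertexSum G f a = vertexSum G f b := by omega
          exact congrArg Sum.inl (hinj this)
        · exfalso
          have hφ := hmono b a hc
          have hm : Fintype.card {v : V // G.degree v = 1} * G.degree b ≤
              Fintype.card {v : V // G.degree v = 1} * G.degree a :=
            Nat.mul_le_mul_left _ hc.le
          omega
    · exfalso
      rw [attach_vsum_inl, attach_vsum_inr] at huv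
      have hr1 := one_le_leafRank G f u'
      have hr2 := leafRank_le G f u'
      by_cases ha : G.degree a = 1
      · rw [dif_pos ha, ha] at huv
        have := one_le_leafRank G f ⟨a, ha⟩
        omega
      · rw [dif_neg ha] at huv
        rcases Nat.eq_zero_or_pos (G.degree a) with ha0 | hapos
        · rw [vsum_zero G f a ha0, ha0] at huv
          omega
        · have hm : Fintype.card {v : V // G.degree v = 1} * 2 ≤
              Fintype.card {v : V // G.degree v = 1} * G.degree a :=
            Nat.mul_le_mul_left _ (by omega)
          omega
    · exfalso
      rw [attach_vsum_inr, attach_vsum_inl] at huv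
      have hr1 := one_le_leafRank G f w
      have hr2 := leafRank_le G f w
      by_cases hb : G.degree b = 1
      · rw [dif_pos hb, hb] at huv
        have := one_le_leafRank G f ⟨b, hb⟩
        omega
      · rw [dif_neg hb] at huv
        rcases Nat.eq_zero_or_pos (G.degree b) with hb0 | hbpos
        · rw [vsum_zero G f b hb0, hb0] at huv
          omega
        · have hm : Fintype.card {v : V // G.degree v = 1} * 2 ≤
              Fintype.card {v : V // G.degree v = 1} * G.degree b :=
            Nat.mul_le_mul_left _ (by omega)
          omega
    · rw [attach_vsum_inr, attach_vsum_inr] at huv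
      exact congrArg Sum.inr (leafRank_inj G f hinj huv)
  · -- strong monotonicity
    intro u v hdeg
    rcases u with a | w <;> rcases v with b | u'
    · rw [attach_degree_inl, attach_degree_inl] at hdeg
      rw [attach_vsum_inl, attach_vsum_inl]
      by_cases ha : G.degree a = 1 <;> by_cases hb : G.degree b = 1
      · exfalso
        rw [if_pos ha, if_pos hb] at hdeg
        omega
      · rw [if_pos ha, if_neg hb] at hdeg
        rw [dif_pos ha, dif_neg hb, ha]
        have hφ := hmono a b (by omega)
        have hr := leafRank_le G f ⟨a, ha⟩
        have hm : Fintype.card {v : V // G.degree v = 1} * 3 ≤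
            Fintype.card {v : V // G.degree v = 1} * G.degree b :=
          Nat.mul_le_mul_left _ (by omega)
        omega
      · rw [if_neg ha, if_pos hb] at hdeg
        have ha0 : G.degree a = 0 := by omega
        rw [dif_neg ha, dif_pos hb, vsum_zero G f a ha0, ha0, hb]
        have := one_le_leafRank G f ⟨b, hb⟩
        omega
      · rw [if_neg ha, if_neg hb] at hdeg
        rw [dif_neg ha, dif_neg hb]
        have hφ := hmono a b (by omega)
        have hm : Fintype.card {v : V // G.degree v = 1} * G.degree a ≤
            Fintype.card {v : V // G.degree v = 1} * G.degree b :=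
          Nat.mul_le_mul_left _ (by omega)
        omega
    · rw [attach_degree_inl, attach_degree_inr] at hdeg
      rw [attach_vsum_inl, attach_vsum_inr]
      by_cases ha : G.degree a = 1
      · exfalso
        rw [if_pos ha] at hdeg
        omega
      · rw [if_neg ha] at hdeg
        have ha0 : G.degree a = 0 := by omega
        rw [dif_neg ha, vsum_zero G f a ha0, ha0]
        have := one_le_leafRank G f u'
        omega
    · rw [attach_degree_inr, attach_degree_inl] at hdeg
      rw [attach_vsum_inr, attach_vsum_inl]
      have hrw := leafRank_le G f w
      by_cases hb : G.degree b = 1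
      · rw [dif_pos hb, hb]
        have := one_le_leafRank G f ⟨b, hb⟩
        omega
      · rw [if_neg hb] at hdeg
        rw [dif_neg hb]
        have hm : Fintype.card {v : V // G.degree v = 1} * 2 ≤
            Fintype.card {v : V // G.degree v = 1} * G.degree b :=
          Nat.mul_le_mul_left _ (by omega)
        omega
    · exfalso
      rw [attach_degree_inr, attach_degree_inr] at hdeg
      omega


end
end

section
/- Let G = DS(L, P^core, R) be a double spider that contains a path P of length one among its legs, with P ∈ R. If deg_G(v_l) ≥ deg_G(v_r) > 3 and the double spider DS(L, P^core, R \ {P}) obtained from G by deleting the leg P is strongly antimagic, then G is strongly antimagic. -/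
open Classical

noncomputable section

/-- The vertex type of a double spider: the core path has vertices `0, …, s`,
and each leg of length `ℓ` (an entry of `L` or of `R`) contributes `ℓ` further
vertices, at distances `1, …, ℓ` from the branch vertex it is attached to. -/
abbrev DSVert (s : ℕ) (L R : List ℕ) : Type :=
  Fin (s + 1) ⊕ (((i : Fin L.length) × Fin (L.get i)) ⊕ ((i : Fin R.length) × Fin (R.get i)))

/-- The double spider `DS(L, Pᶜᵒʳᵉ, R)`: the core path `v_l = 0 — 1 — ⋯ — s = v_r`,
together with, for each entry `ℓ` of `L` (resp. of `R`), a leg which is a path of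
length `ℓ` attached at `v_l` (resp. at `v_r`). -/
def DoubleSpider (s : ℕ) (L R : List ℕ) : SimpleGraph (DSVert s L R) :=
  SimpleGraph.fromRel fun x y =>
    match x, y with
    | Sum.inl a, Sum.inl b => (b : ℕ) = (a : ℕ) + 1
    | Sum.inl a, Sum.inr (Sum.inl p) => (a : ℕ) = 0 ∧ (p.2 : ℕ) = 0
    | Sum.inl a, Sum.inr (Sum.inr p) => (a : ℕ) = s ∧ (p.2 : ℕ) = 0
    | Sum.inr (Sum.inl p), Sum.inr (Sum.inl q) => p.1 = q.1 ∧ (q.2 : ℕ) = (p.2 : ℕ) + 1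
    | Sum.inr (Sum.inr p), Sum.inr (Sum.inr q) => p.1 = q.1 ∧ (q.2 : ℕ) = (p.2 : ℕ) + 1
    | _, _ => False

/-- The branch vertex `v_l` of a double spider. -/
def vL (s : ℕ) (L R : List ℕ) : DSVert s L R := Sum.inl 0

/-- The branch vertex `v_r` of a double spider. -/
def vR (s : ℕ) (L R : List ℕ) : DSVert s L R := Sum.inl (Fin.last s)

lemma DS_degree_pos (s : ℕ) (hs : 1 ≤ s) (L R : List ℕ) (u : DSVert s L R) :
    0 < (DoubleSpider s L R).degree u := by
  rw [SimpleGraph.degree_pos_iff_exists_adj]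
  rcases u with a | (⟨i, j⟩ | ⟨i, j⟩)
  · rcases Nat.lt_or_ge (a : ℕ) s with h | h
    · refine ⟨Sum.inl ⟨(a:ℕ)+1, by omega⟩, ?_⟩
      rw [DoubleSpider, SimpleGraph.fromRel_adj]
      exact ⟨by simp [Fin.ext_iff], Or.inl rfl⟩
    · refine ⟨Sum.inl ⟨(a:ℕ)-1, by omega⟩, ?_⟩
      rw [DoubleSpider, SimpleGraph.fromRel_adj]
      have ha : (a:ℕ) = s := by omega
      exact ⟨by simp [Fin.ext_iff]; omega, Or.inr (by simp; omega)⟩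
  · rcases Nat.eq_zero_or_pos (j : ℕ) with h | h
    · exact ⟨Sum.inl 0, by
        rw [DoubleSpider, SimpleGraph.fromRel_adj]
        exact ⟨by simp, Or.inr ⟨by simp, h⟩⟩⟩
    · refine ⟨Sum.inr (Sum.inl ⟨i, ⟨(j:ℕ)-1, by omega⟩⟩), ?_⟩
      rw [DoubleSpider, SimpleGraph.fromRel_adj]
      constructor
      · intro hc; simp [Fin.ext_iff] at hc; omega
      · exact Or.inr ⟨rfl, by simp; omega⟩
  · rcases Nat.eq_zero_or_pos (j : ℕ) with h | h
    · exact ⟨Sum.inl (Fin.last s), by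
        rw [DoubleSpider, SimpleGraph.fromRel_adj]
        exact ⟨by simp, Or.inr ⟨by simp, h⟩⟩⟩
    · refine ⟨Sum.inr (Sum.inr ⟨i, ⟨(j:ℕ)-1, by omega⟩⟩), ?_⟩
      rw [DoubleSpider, SimpleGraph.fromRel_adj]
      constructor
      · intro hc; simp [Fin.ext_iff] at hc; omega
      · exact Or.inr ⟨rfl, by simp; omega⟩

lemma DS_card_le_two {V : Type*} [Fintype V] [DecidableEq V] (G : SimpleGraph V) (u x y : V)
    (h : ∀ v, G.Adj u v → v = x ∨ v = y) : G.degree u ≤ 2 := by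
  rw [← SimpleGraph.card_neighborFinset_eq_degree]
  have : G.neighborFinset u ⊆ {x, y} := by
    intro v hv
    rw [SimpleGraph.mem_neighborFinset] at hv
    rcases h v hv with h | h <;> simp [h]
  calc (G.neighborFinset u).card ≤ ({x, y} : Finset V).card := Finset.card_le_card this
    _ ≤ 2 := Finset.card_insert_le x {y}

lemma DS_degree_le_two (s : ℕ) (L R : List ℕ) (u : DSVert s L R)
    (h0 : u ≠ Sum.inl 0) (hl : u ≠ Sum.inl (Fin.last s)) :
    (DoubleSpider s L R).degree u ≤ 2 := by
  rcases u with a | (⟨i, j⟩ | ⟨i, j⟩)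
  · have ha0 : (a : ℕ) ≠ 0 := fun hc => h0 (by simp [Fin.ext_iff, hc])
    have has : (a : ℕ) ≠ s := fun hc => hl (by simp [Fin.ext_iff, hc])
    apply DS_card_le_two _ _ (Sum.inl ⟨(a:ℕ)-1, by omega⟩) (Sum.inl ⟨(a:ℕ)+1, by omega⟩)
    intro v hv
    rw [DoubleSpider, SimpleGraph.fromRel_adj] at hv
    rcases v with b | (⟨i', j'⟩ | ⟨i', j'⟩) <;> dsimp only at hv
    · rcases hv.2 with h | h
      · right; simp [Sigma.mk.inj_iff, Fin.ext_iff]; omega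
      · left; simp [Sigma.mk.inj_iff, Fin.ext_iff]; omega
    · rcases hv.2 with ⟨h, -⟩ | ⟨h, -⟩ <;> omega
    · rcases hv.2 with ⟨h, -⟩ | ⟨h, -⟩ <;> omega
  · set prev : DSVert s L R := if h : 0 < (j:ℕ) then Sum.inr (Sum.inl ⟨i, ⟨(j:ℕ)-1, by omega⟩⟩) else Sum.inl 0 with hprev
    set next : DSVert s L R := if h : (j:ℕ)+1 < L.get i then Sum.inr (Sum.inl ⟨i, ⟨(j:ℕ)+1, h⟩⟩) else prev with hnext
    apply DS_card_le_two _ _ prev next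
    intro v hv
    rw [DoubleSpider, SimpleGraph.fromRel_adj] at hv
    rcases v with b | (⟨i', j'⟩ | ⟨i', j'⟩) <;> dsimp only at hv
    · rcases hv.2 with h | h
      · exact absurd h (by simp)
      · obtain ⟨hb, hj⟩ := h
        left; rw [hprev]; rw [dif_neg (by omega)]
        rw [Sum.inl.injEq, Fin.ext_iff, Fin.val_zero]; omega
    · rcases hv.2 with ⟨h1, h2⟩ | ⟨h1, h2⟩
      · subst h1
        right; rw [hnext]; rw [dif_pos (by omega)]
        simp [Sigma.mk.inj_iff, Fin.ext_iff]; omega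
      · subst h1
        left; rw [hprev]; rw [dif_pos (by omega)]
        simp [Sigma.mk.inj_iff, Fin.ext_iff]; omega
    · exact absurd hv.2 (by simp)
  · set prev : DSVert s L R := if h : 0 < (j:ℕ) then Sum.inr (Sum.inr ⟨i, ⟨(j:ℕ)-1, by omega⟩⟩) else Sum.inl (Fin.last s) with hprev
    set next : DSVert s L R := if h : (j:ℕ)+1 < R.get i then Sum.inr (Sum.inr ⟨i, ⟨(j:ℕ)+1, h⟩⟩) else prev with hnext
    apply DS_card_le_two _ _ prev next
    intro v hv
    rw [DoubleSpider, SimpleGraph.fromRel_adj] at hv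
    rcases v with b | (⟨i', j'⟩ | ⟨i', j'⟩) <;> dsimp only at hv
    · rcases hv.2 with h | h
      · exact absurd h (by simp)
      · obtain ⟨hb, hj⟩ := h
        left; rw [hprev]; rw [dif_neg (by omega)]
        simp [Sigma.mk.inj_iff, Fin.ext_iff]; omega
    · exact absurd hv.2 (by simp)
    · rcases hv.2 with ⟨h1, h2⟩ | ⟨h1, h2⟩
      · subst h1
        right; rw [hnext]; rw [dif_pos (by omega)]
        simp [Sigma.mk.inj_iff, Fin.ext_iff]; omega
      · subst h1
        left; rw [hprev]; rw [dif_pos (by omega)]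
        simp [Sigma.mk.inj_iff, Fin.ext_iff]; omega


section Emb
variable (s : ℕ) (L R R' : List ℕ) (em : Fin R'.length → Fin R.length)
  (hget : ∀ i, R'.get i = R.get (em i)) (k : Fin R.length) (hk1 : R.get k = 1)

def DSemb : DSVert s L R' → DSVert s L R := fun x =>
  match x with
  | Sum.inl a => Sum.inl a
  | Sum.inr (Sum.inl p) => Sum.inr (Sum.inl p)
  | Sum.inr (Sum.inr ⟨i, j⟩) => Sum.inr (Sum.inr ⟨em i, Fin.cast (hget i) j⟩)

def DSw : DSVert s L R := Sum.inr (Sum.inr ⟨k, ⟨0, by omega⟩⟩)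

variable (hinj : Function.Injective em) (hnk : ∀ i, em i ≠ k)
  (hsurj : ∀ j, j ≠ k → ∃ i, em i = j)

include hinj in
lemma DSemb_injective : Function.Injective (DSemb s L R R' em hget) := by
  intro x y h
  rcases x with a | (⟨i, j⟩ | ⟨i, j⟩) <;> rcases y with b | (⟨i', j'⟩ | ⟨i', j'⟩) <;>
    simp only [DSemb, Sum.inl.injEq, Sum.inr.injEq, Sigma.mk.inj_iff, reduceCtorEq] at h
  · exact congrArg Sum.inl h
  · obtain ⟨h1, h2⟩ := h; subst h1; rw [eq_of_heq h2]
  · obtain ⟨h1, h2⟩ := h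
    have hii : i = i' := hinj h1
    subst hii
    have h3 : Fin.cast (hget i) j = Fin.cast (hget i) j' := eq_of_heq h2
    have h4 : (j : ℕ) = (j' : ℕ) := by simpa using congrArg Fin.val h3
    simp [Sigma.mk.inj_iff, Fin.ext_iff, h4]

include hinj in
lemma DSemb_adj (a b : DSVert s L R') :
    (DoubleSpider s L R').Adj a b ↔
      (DoubleSpider s L R).Adj (DSemb s L R R' em hget a) (DSemb s L R R' em hget b) := by
  rw [DoubleSpider, DoubleSpider, SimpleGraph.fromRel_adj, SimpleGraph.fromRel_adj,
    ne_eq, ne_eq, (DSemb_injective s L R R' em hget hinj).eq_iff]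
  apply and_congr Iff.rfl
  rcases a with a | (⟨i, j⟩ | ⟨i, j⟩) <;> rcases b with b | (⟨i', j'⟩ | ⟨i', j'⟩) <;>
    simp [DSemb, hinj.eq_iff]

include hnk in
lemma DSw_ne_emb (a : DSVert s L R') : DSemb s L R R' em hget a ≠ DSw s L R k hk1 := by
  rcases a with a | (⟨i, j⟩ | ⟨i, j⟩)
  · simp [DSemb, DSw]
  · simp [DSemb, DSw]
  · simp [DSemb, DSw, hnk i]

lemma DSw_adj (hs : 1 ≤ s) (x : DSVert s L R) :
    (DoubleSpider s L R).Adj x (DSw s L R k hk1) ↔ x = vR s L R := by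
  constructor
  · intro hx
    rw [DoubleSpider, SimpleGraph.fromRel_adj] at hx
    rcases x with a | (⟨i, j⟩ | ⟨i, j⟩)
    · rcases hx.2 with ⟨h1, h2⟩ | h
      · simp [vR, Fin.ext_iff, h1, Fin.val_last]
      · exact absurd h (by simp [DSw])
    · rcases hx.2 with h | h <;> exact absurd h (by simp [DSw])
    · exfalso
      rcases hx.2 with ⟨h1, h2⟩ | ⟨h1, h2⟩ <;> dsimp only [DSw] at h1 h2
      · omega
      · subst h1
        have := j.isLt
        omega
  · rintro rfl
    rw [DoubleSpider, SimpleGraph.fromRel_adj]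
    exact ⟨by simp [vR, DSw], Or.inl ⟨by simp [vR], rfl⟩⟩

include hsurj hk1 in
lemma DSemb_surj (x : DSVert s L R) (hx : x ≠ DSw s L R k hk1) :
    ∃ a, DSemb s L R R' em hget a = x := by
  rcases x with a | (⟨i, j⟩ | ⟨i, j⟩)
  · exact ⟨Sum.inl a, rfl⟩
  · exact ⟨Sum.inr (Sum.inl ⟨i, j⟩), rfl⟩
  · rcases eq_or_ne i k with rfl | hik
    · exfalso
      apply hx
      have := j.isLt
      simp [DSw, Sigma.mk.inj_iff, Fin.ext_iff]
      omega
    · obtain ⟨i0, hi0⟩ := hsurj i hik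
      refine ⟨Sum.inr (Sum.inr ⟨i0, Fin.cast (by rw [hget i0, hi0]) j⟩), ?_⟩
      simp only [DSemb]
      subst hi0
      rfl

end Emb

lemma vertexSum_eq {V : Type*} [Fintype V] (G : SimpleGraph V) (f : Sym2 V → ℕ) (u : V)
    [DecidableEq V] [Fintype (G.neighborSet u)] :
    vertexSum G f u = ∑ e ∈ G.incidenceFinset u, f e := by
  rw [vertexSum]
  apply Finset.sum_congr _ fun _ _ => rfl
  ext e
  rw [SimpleGraph.mem_incidenceFinset, SimpleGraph.mem_incidenceFinset]

section Main

theorem DS_aux (s : ℕ) (L R R' : List ℕ) (em : Fin R'.length → Fin R.length)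
    (hget : ∀ i, R'.get i = R.get (em i)) (k : Fin R.length) (hk1 : R.get k = 1)
    (hs : 1 ≤ s)
    (hinj : Function.Injective em) (hnk : ∀ i, em i ≠ k)
    (hsurj : ∀ j, j ≠ k → ∃ i, em i = j)
    (hlr : (DoubleSpider s L R).degree (vR s L R) ≤ (DoubleSpider s L R).degree (vL s L R))
    (hr : 3 < (DoubleSpider s L R).degree (vR s L R))
    (h : IsStronglyAntimagic (DoubleSpider s L R')) :
    IsStronglyAntimagic (DoubleSpider s L R) := by
  classical
  obtain ⟨f, hbij, hfinj, hfmono⟩ := h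
  set G := DoubleSpider s L R with hG
  set G' := DoubleSpider s L R' with hG'
  set ι : DSVert s L R' → DSVert s L R := DSemb s L R R' em hget with hι
  set w : DSVert s L R := DSw s L R k hk1 with hw
  set newE : Sym2 (DSVert s L R) := s(vR s L R, w) with hnewE
  have hιinj : Function.Injective ι := DSemb_injective s L R R' em hget hinj
  have hιadj : ∀ a b, G'.Adj a b ↔ G.Adj (ι a) (ι b) := DSemb_adj s L R R' em hget hinj
  have hwne : ∀ a, ι a ≠ w := DSw_ne_emb s L R R' em hget k hk1 hnk
  have hwadj : ∀ x, G.Adj x w ↔ x = vR s L R := DSw_adj s L R k hk1 hs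
  have hsurjv : ∀ x, x ≠ w → ∃ a, ι a = x := DSemb_surj s L R R' em hget k hk1 hsurj
  have hvRemb : ∀ u', ι u' = vR s L R ↔ u' = Sum.inl (Fin.last s) := by
    intro u'
    constructor
    · intro hu
      apply hιinj
      rw [hu]; rfl
    · rintro rfl; rfl
  -- edge classification
  have hclass : ∀ e ∈ G.edgeSet, e = newE ∨
      ∃ a b, G'.Adj a b ∧ e = s(ι a, ι b) := by
    intro e he
    induction e using Sym2.ind with
    | _ x y =>
      rw [SimpleGraph.mem_edgeSet] at he
      by_cases hxw : x = w
      · subst hxw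
        have hy : y = vR s L R := (hwadj y).mp he.symm
        left; rw [hy, Sym2.eq_swap]
      · by_cases hyw : y = w
        · subst hyw
          have hx : x = vR s L R := (hwadj x).mp he
          left; rw [hx]
        · obtain ⟨a, ha⟩ := hsurjv x hxw
          obtain ⟨b, hb⟩ := hsurjv y hyw
          right
          refine ⟨a, b, ?_, by rw [ha, hb]⟩
          rw [hιadj, ha, hb]; exact he
  have hnewEedge : newE ∈ G.edgeSet := by
    rw [hnewE, SimpleGraph.mem_edgeSet]
    exact (hwadj _).mpr rfl
  have hmapedge : ∀ e' ∈ G'.edgeSet, Sym2.map ι e' ∈ G.edgeSet := by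
    intro e' he'
    induction e' using Sym2.ind with
    | _ a b =>
      rw [Sym2.map_pair_eq, SimpleGraph.mem_edgeSet]
      rw [SimpleGraph.mem_edgeSet] at he'
      exact (hιadj a b).mp he'
  have hmapne : ∀ e' : Sym2 (DSVert s L R'), Sym2.map ι e' ≠ newE := by
    intro e' hc
    have hmem : w ∈ Sym2.map ι e' := by rw [hc, hnewE]; exact Sym2.mem_mk_right _ _
    rw [Sym2.mem_map] at hmem
    obtain ⟨a, -, ha⟩ := hmem
    exact hwne a ha
  -- incidence sets
  have hinc : ∀ u (e : Sym2 (DSVert s L R)),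
      e ∈ G.incidenceFinset u ↔ e ∈ G.edgeSet ∧ u ∈ e := by
    intro u e
    rw [SimpleGraph.mem_incidenceFinset]
    exact Iff.rfl
  have hinc' : ∀ u' (e : Sym2 (DSVert s L R')),
      e ∈ G'.incidenceFinset u' ↔ e ∈ G'.edgeSet ∧ u' ∈ e := by
    intro u e
    rw [SimpleGraph.mem_incidenceFinset]
    exact Iff.rfl
  have hmem_map : ∀ (u' : DSVert s L R') (e' : Sym2 (DSVert s L R')),
      ι u' ∈ Sym2.map ι e' ↔ u' ∈ e' := by
    intro u' e'
    rw [Sym2.mem_map]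
    constructor
    · rintro ⟨a, ha, haeq⟩
      rwa [← hιinj haeq]
    · intro hu; exact ⟨u', hu, rfl⟩
  have hinc_emb : ∀ u', ι u' ≠ vR s L R →
      G.incidenceFinset (ι u') = (G'.incidenceFinset u').image (Sym2.map ι) := by
    intro u' hne
    ext e
    rw [hinc]
    constructor
    · rintro ⟨he, hmem⟩
      rcases hclass e he with rfl | ⟨a, b, hab, rfl⟩
      · exfalso
        rw [hnewE, Sym2.mem_iff] at hmem
        rcases hmem with h1 | h1
        · exact hne h1
        · exact hwne u' h1
      · rw [← Sym2.map_pair_eq] at hmem ⊢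
        refine Finset.mem_image.mpr ⟨s(a, b), ?_, rfl⟩
        rw [hinc']
        exact ⟨(SimpleGraph.mem_edgeSet _).mpr hab, (hmem_map u' _).mp hmem⟩
    · intro hmem
      obtain ⟨e', he', rfl⟩ := Finset.mem_image.mp hmem
      rw [hinc'] at he'
      exact ⟨hmapedge e' he'.1, (hmem_map u' e').mpr he'.2⟩
  have hinc_vR : G.incidenceFinset (vR s L R) =
      insert newE ((G'.incidenceFinset (Sum.inl (Fin.last s))).image (Sym2.map ι)) := by
    ext e
    rw [hinc, Finset.mem_insert]
    constructor
    · rintro ⟨he, hmem⟩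
      rcases hclass e he with rfl | ⟨a, b, hab, rfl⟩
      · exact Or.inl rfl
      · right
        rw [← Sym2.map_pair_eq] at hmem ⊢
        have : ι (Sum.inl (Fin.last s)) = vR s L R := rfl
        rw [← this] at hmem
        refine Finset.mem_image.mpr ⟨s(a, b), ?_, rfl⟩
        rw [hinc']
        exact ⟨(SimpleGraph.mem_edgeSet _).mpr hab, (hmem_map _ _).mp hmem⟩
    · rintro (rfl | hmem)
      · exact ⟨hnewEedge, by rw [hnewE]; exact Sym2.mem_mk_left _ _⟩
      · obtain ⟨e', he', rfl⟩ := Finset.mem_image.mp hmem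
        rw [hinc'] at he'
        refine ⟨hmapedge e' he'.1, ?_⟩
        have : ι (Sum.inl (Fin.last s)) = vR s L R := rfl
        rw [← this]
        exact (hmem_map _ e').mpr he'.2
  have hinc_w : G.incidenceFinset w = {newE} := by
    ext e
    rw [hinc, Finset.mem_singleton]
    constructor
    · rintro ⟨he, hmem⟩
      rcases hclass e he with rfl | ⟨a, b, hab, rfl⟩
      · rfl
      · exfalso
        rw [Sym2.mem_iff] at hmem
        rcases hmem with h1 | h1
        · exact hwne a h1.symm
        · exact hwne b h1.symm
    · rintro rfl
      exact ⟨hnewEedge, by rw [hnewE]; exact Sym2.mem_mk_right _ _⟩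
  have hnewE_not_img : ∀ t : Finset (Sym2 (DSVert s L R')),
      newE ∉ t.image (Sym2.map ι) := by
    intro t hc
    obtain ⟨e', -, he'⟩ := Finset.mem_image.mp hc
    exact hmapne e' he'
  -- edge finset and cardinality
  have hedgefin : G.edgeFinset = insert newE ((G'.edgeFinset).image (Sym2.map ι)) := by
    ext e
    rw [SimpleGraph.mem_edgeFinset, Finset.mem_insert]
    constructor
    · intro he
      rcases hclass e he with rfl | ⟨a, b, hab, rfl⟩
      · exact Or.inl rfl
      · right
        rw [← Sym2.map_pair_eq]
        exact Finset.mem_image.mpr ⟨s(a, b), SimpleGraph.mem_edgeFinset.mpr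
          ((SimpleGraph.mem_edgeSet _).mpr hab), rfl⟩
    · rintro (rfl | hmem)
      · exact hnewEedge
      · obtain ⟨e', he', rfl⟩ := Finset.mem_image.mp hmem
        exact hmapedge e' (SimpleGraph.mem_edgeFinset.mp he')
  have hcard : G.edgeFinset.card = G'.edgeFinset.card + 1 := by
    rw [hedgefin, Finset.card_insert_of_notMem (hnewE_not_img _),
      Finset.card_image_of_injective _ (Sym2.map.injective hιinj)]
  set m := G'.edgeFinset.card with hm
  -- the labeling
  set ρ : DSVert s L R → DSVert s L R' := Function.invFun ι with hρ
  have hρι : ∀ a, ρ (ι a) = a := Function.leftInverse_invFun hιinj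
  set g : Sym2 (DSVert s L R) → ℕ := fun e =>
    if e = newE then 1 else if e ∈ G.edgeSet then f (Sym2.map ρ e) + 1 else 0 with hg
  have hg_new : g newE = 1 := by rw [hg]; simp
  have hg_map : ∀ e' ∈ G'.edgeSet, g (Sym2.map ι e') = f e' + 1 := by
    intro e' he'
    rw [hg]
    simp only [hmapne e', if_false, hmapedge e' he', if_true, if_neg (hmapne e'),
      if_pos (hmapedge e' he')]
    congr 1
    rw [Sym2.map_map]
    have : ρ ∘ ι = id := funext hρι
    rw [this, Sym2.map_id]
    rfl
  -- vertex sums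
  have hsum_image : ∀ u' : DSVert s L R',
      ∑ e ∈ (G'.incidenceFinset u').image (Sym2.map ι), g e
        = vertexSum G' f u' + G'.degree u' := by
    intro u'
    rw [Finset.sum_image (fun x _ y _ hxy => Sym2.map.injective hιinj hxy)]
    have hcongr : ∀ e' ∈ G'.incidenceFinset u', g (Sym2.map ι e') = f e' + 1 :=
      fun e' he' => hg_map e' ((hinc' u' e').mp he').1
    rw [Finset.sum_congr rfl hcongr, Finset.sum_add_distrib, Finset.sum_const, smul_eq_mul,
      mul_one, vertexSum_eq G' f u', SimpleGraph.card_incidenceFinset_eq_degree]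
  have hsum_emb : ∀ u', ι u' ≠ vR s L R →
      vertexSum G g (ι u') = vertexSum G' f u' + G'.degree u' := by
    intro u' hne
    rw [vertexSum_eq, hinc_emb u' hne, hsum_image]
  have hsum_vR : vertexSum G g (vR s L R) =
      vertexSum G' f (Sum.inl (Fin.last s)) + G'.degree (Sum.inl (Fin.last s)) + 1 := by
    rw [vertexSum_eq, hinc_vR, Finset.sum_insert (hnewE_not_img _), hg_new, hsum_image]
    ring
  have hsum_w : vertexSum G g w = 1 := by
    rw [vertexSum_eq, hinc_w, Finset.sum_singleton, hg_new]
  -- degrees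
  have hdeg_emb : ∀ u', ι u' ≠ vR s L R → G.degree (ι u') = G'.degree u' := by
    intro u' hne
    rw [← SimpleGraph.card_incidenceFinset_eq_degree, hinc_emb u' hne,
      Finset.card_image_of_injective _ (Sym2.map.injective hιinj),
      SimpleGraph.card_incidenceFinset_eq_degree]
  have hdeg_vR : G.degree (vR s L R) = G'.degree (Sum.inl (Fin.last s)) + 1 := by
    rw [← SimpleGraph.card_incidenceFinset_eq_degree, hinc_vR,
      Finset.card_insert_of_notMem (hnewE_not_img _),
      Finset.card_image_of_injective _ (Sym2.map.injective hιinj),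
      SimpleGraph.card_incidenceFinset_eq_degree]
  have hdeg_w : G.degree w = 1 := by
    rw [← SimpleGraph.card_incidenceFinset_eq_degree, hinc_w, Finset.card_singleton]
  have hιvL : ι (Sum.inl 0) = vL s L R := rfl
  have hιvR : ι (Sum.inl (Fin.last s)) = vR s L R := rfl
  have hvLvR : vL s L R ≠ vR s L R := by
    simp only [vL, vR, ne_eq, Sum.inl.injEq, Fin.ext_iff, Fin.val_last, Fin.val_zero]
    omega
  have hsum_all : ∀ u', vertexSum G g (ι u') = vertexSum G' f u' + G.degree (ι u') := by
    intro u'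
    by_cases hne : ι u' = vR s L R
    · have hu : u' = Sum.inl (Fin.last s) := (hvRemb u').mp hne
      subst hu
      rw [hne, hsum_vR, hdeg_vR]
      omega
    · rw [hsum_emb u' hne, hdeg_emb u' hne]
  have hdegpos : ∀ u : DSVert s L R, 0 < G.degree u := DS_degree_pos s hs L R
  have hdegpos' : ∀ u : DSVert s L R', 0 < G'.degree u := DS_degree_pos s hs L R'
  have hσpos : ∀ u', 1 ≤ vertexSum G' f u' := by
    intro u'
    have hpos : 0 < (G'.incidenceFinset u').card := by
      rw [SimpleGraph.card_incidenceFinset_eq_degree]; exact hdegpos' u'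
    obtain ⟨e, he⟩ := Finset.card_pos.mp hpos
    have he1 : 1 ≤ f e := (Set.mem_Icc.mp (hbij.1 ((hinc' u' e).mp he).1)).1
    calc 1 ≤ f e := he1
      _ ≤ vertexSum G' f u' := Finset.single_le_sum (fun i _ => Nat.zero_le _) he
  -- branch degrees
  have hdl : G.degree (vL s L R) = G'.degree (Sum.inl 0) := by
    rw [← hιvL]; exact hdeg_emb _ (by rw [hιvL]; exact hvLvR)
  rw [hdeg_vR, hdl] at hlr
  rw [hdeg_vR] at hr
  have hle2 : ∀ u' : DSVert s L R', u' ≠ Sum.inl 0 → u' ≠ Sum.inl (Fin.last s) →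
      G'.degree u' ≤ 2 := DS_degree_le_two s L R'
  -- key monotonicity on the embedded part
  have hM : ∀ u' v', G.degree (ι u') < G.degree (ι v') →
      vertexSum G' f u' < vertexSum G' f v' := by
    intro u' v' hlt
    by_cases hu : u' = Sum.inl (Fin.last s) <;> by_cases hv : v' = Sum.inl (Fin.last s)
    · subst hu; subst hv; exact absurd hlt (lt_irrefl _)
    · subst hu
      rw [hιvR, hdeg_vR, hdeg_emb v' (fun hc => hv ((hvRemb v').mp hc))] at hlt
      by_cases hv0 : v' = Sum.inl 0
      · subst hv0
        exact hfmono _ _ (by omega)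
      · exact absurd (hle2 v' hv0 hv) (by omega)
    · subst hv
      rw [hιvR, hdeg_vR, hdeg_emb u' (fun hc => hu ((hvRemb u').mp hc))] at hlt
      by_cases hu0 : u' = Sum.inl 0
      · subst hu0; exact absurd hlt (by omega)
      · exact hfmono _ _ (by have := hle2 u' hu0 hu; omega)
    · rw [hdeg_emb u' (fun hc => hu ((hvRemb u').mp hc)),
        hdeg_emb v' (fun hc => hv ((hvRemb v').mp hc))] at hlt
      exact hfmono _ _ hlt
  have hΦlt : ∀ u' v', G.degree (ι u') < G.degree (ι v') →
      vertexSum G g (ι u') < vertexSum G g (ι v') := by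
    intro u' v' hlt
    rw [hsum_all, hsum_all]
    have := hM u' v' hlt
    omega
  have hΦne : ∀ u' v', u' ≠ v' → G.degree (ι u') = G.degree (ι v') →
      vertexSum G g (ι u') ≠ vertexSum G g (ι v') := by
    intro u' v' hne hdeq hc
    rw [hsum_all, hsum_all, hdeq] at hc
    exact hne (hfinj (by omega))
  -- assemble
  refine ⟨g, ?_, ?_, ?_⟩
  · -- bijection
    rw [hcard]
    refine ⟨?_, ?_, ?_⟩
    · intro e he
      rcases hclass e he with rfl | ⟨a, b, hab, rfl⟩
      · rw [hg_new]; exact Set.mem_Icc.mpr ⟨le_refl 1, by omega⟩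
      · rw [← Sym2.map_pair_eq, hg_map _ ((SimpleGraph.mem_edgeSet _).mpr hab)]
        have := Set.mem_Icc.mp (hbij.1 ((SimpleGraph.mem_edgeSet _).mpr hab))
        exact Set.mem_Icc.mpr ⟨by omega, by omega⟩
    · intro e1 h1 e2 h2 heq
      rcases hclass e1 h1 with rfl | ⟨a, b, hab, rfl⟩ <;>
        rcases hclass e2 h2 with rfl | ⟨c, d, hcd, rfl⟩
      · rfl
      · exfalso
        rw [hg_new, ← Sym2.map_pair_eq, hg_map _ ((SimpleGraph.mem_edgeSet _).mpr hcd)] at heq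
        have := (Set.mem_Icc.mp (hbij.1 ((SimpleGraph.mem_edgeSet _).mpr hcd))).1
        omega
      · exfalso
        rw [hg_new, ← Sym2.map_pair_eq, hg_map _ ((SimpleGraph.mem_edgeSet _).mpr hab)] at heq
        have := (Set.mem_Icc.mp (hbij.1 ((SimpleGraph.mem_edgeSet _).mpr hab))).1
        omega
      · rw [← Sym2.map_pair_eq, ← Sym2.map_pair_eq,
          hg_map _ ((SimpleGraph.mem_edgeSet _).mpr hab),
          hg_map _ ((SimpleGraph.mem_edgeSet _).mpr hcd)] at heq
        have heq2 : f s(a, b) = f s(c, d) := by omega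
        have := hbij.2.1 ((SimpleGraph.mem_edgeSet _).mpr hab)
          ((SimpleGraph.mem_edgeSet _).mpr hcd) heq2
        rw [← Sym2.map_pair_eq, ← Sym2.map_pair_eq, this]
    · intro y hy
      rw [Set.mem_Icc] at hy
      by_cases hy1 : y = 1
      · exact ⟨newE, hnewEedge, by rw [hg_new, hy1]⟩
      · have hy' : y - 1 ∈ Set.Icc 1 m := Set.mem_Icc.mpr ⟨by omega, by omega⟩
        obtain ⟨e', he', hfe⟩ := hbij.2.2 hy'
        exact ⟨Sym2.map ι e', hmapedge e' he', by rw [hg_map e' he', hfe]; omega⟩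
  · -- injectivity of vertex sums
    intro u v heq
    by_contra hne
    by_cases huw : u = w <;> by_cases hvw : v = w
    · exact hne (huw.trans hvw.symm)
    · subst huw
      obtain ⟨v', rfl⟩ := hsurjv v hvw
      rw [hsum_w, hsum_all] at heq
      have h1 := hσpos v'
      have h2 := hdegpos (ι v')
      omega
    · subst hvw
      obtain ⟨u', rfl⟩ := hsurjv u huw
      rw [hsum_w, hsum_all] at heq
      have h1 := hσpos u'
      have h2 := hdegpos (ι u')
      omega
    · obtain ⟨u', rfl⟩ := hsurjv u huw
      obtain ⟨v', rfl⟩ := hsurjv v hvw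
      have hne' : u' ≠ v' := fun hc => hne (by rw [hc])
      rcases lt_trichotomy (G.degree (ι u')) (G.degree (ι v')) with hlt | hde | hgt
      · exact absurd heq (Nat.ne_of_lt (hΦlt _ _ hlt))
      · exact hΦne u' v' hne' hde heq
      · exact absurd heq.symm (Nat.ne_of_lt (hΦlt _ _ hgt))
  · -- strong monotonicity
    intro u v hdeg
    by_cases huw : u = w <;> by_cases hvw : v = w
    · subst huw; subst hvw; exact absurd hdeg (lt_irrefl _)
    · subst huw
      obtain ⟨v', rfl⟩ := hsurjv v hvw
      rw [hdeg_w] at hdeg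
      rw [hsum_w, hsum_all]
      have := hσpos v'
      omega
    · subst hvw
      rw [hdeg_w] at hdeg
      have := hdegpos u
      omega
    · obtain ⟨u', rfl⟩ := hsurjv u huw
      obtain ⟨v', rfl⟩ := hsurjv v hvw
      exact hΦlt _ _ hdeg


end Main

/-- Let `G = DS(L, Pᶜᵒʳᵉ, R)` be a double spider containing a leg `P` of
length one with `P ∈ R`.  If `deg_G(v_l) ≥ deg_G(v_r) > 3` and the double spider
`DS(L, Pᶜᵒʳᵉ, R \ {P})` obtained from `G` by deleting the leg `P` is strongly antimagic,
then `G` is strongly antimagic. -/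
theorem stronglyAntimagic_of_erase_right_one (s : ℕ) (hs : 1 ≤ s) (L R : List ℕ)
    (hL : ∀ ℓ ∈ L, 1 ≤ ℓ) (hR : ∀ ℓ ∈ R, 1 ≤ ℓ)
    (hP : 1 ∈ R)
    (hlr : (DoubleSpider s L R).degree (vR s L R) ≤ (DoubleSpider s L R).degree (vL s L R))
    (hr : 3 < (DoubleSpider s L R).degree (vR s L R))
    (h : IsStronglyAntimagic (DoubleSpider s L (R.erase 1))) :
    IsStronglyAntimagic (DoubleSpider s L R) := by
  classical
  have hken : R.idxOf 1 < R.length := List.idxOf_lt_length_iff.mpr hP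
  set k : Fin R.length := ⟨R.idxOf 1, hken⟩ with hk
  have hlen : (R.erase 1).length + 1 = R.length := by
    rw [List.length_erase_of_mem hP]; have := List.length_pos_of_mem hP; omega
  set em : Fin (R.erase 1).length → Fin R.length := fun i =>
    Fin.cast hlen ((Fin.cast hlen.symm k).succAbove i) with hem
  have hk1 : R.get k = 1 := List.getElem_idxOf hken
  have hvallt : ∀ i : Fin (R.erase 1).length, (i:ℕ) < R.idxOf 1 → ((em i):ℕ) = (i:ℕ) := by
    intro i hi
    simp only [hem, Fin.coe_cast]
    rw [Fin.succAbove, if_pos (by simp [Fin.lt_def, hk]; omega)]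
    simp
  have hvalge : ∀ i : Fin (R.erase 1).length, ¬((i:ℕ) < R.idxOf 1) →
      ((em i):ℕ) = (i:ℕ)+1 := by
    intro i hi
    simp only [hem, Fin.coe_cast]
    rw [Fin.succAbove, if_neg (by simp [Fin.lt_def, hk]; omega)]
    simp
  have herase : R.erase 1 = R.eraseIdx (R.idxOf 1) := List.erase_eq_eraseIdx_of_idxOf rfl
  have hget : ∀ i, (R.erase 1).get i = R.get (em i) := by
    intro i
    rw [List.get_eq_getElem, List.get_eq_getElem, List.getElem_of_eq herase i.isLt,
      List.getElem_eraseIdx]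
    rcases Nat.lt_or_ge (i:ℕ) (R.idxOf 1) with hc | hc
    · rw [dif_pos hc]
      have hei := hvallt i hc
      congr 1
      omega
    · rw [dif_neg (by omega)]
      have hei := hvalge i (by omega)
      congr 1
      omega
  have hinj : Function.Injective em := by
    intro i j hij
    rw [hem] at hij
    exact Fin.succAbove_right_injective (Fin.cast_injective hlen hij)
  have hnk : ∀ i, em i ≠ k := by
    intro i hc
    rw [hem] at hc
    have hv := congrArg Fin.val hc
    simp only [Fin.coe_cast] at hv
    exact Fin.succAbove_ne _ i (Fin.ext (hv.trans (Fin.coe_cast _ _).symm))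
  have hsurj : ∀ j, j ≠ k → ∃ i, em i = j := by
    intro j hj
    have hne : Fin.cast hlen.symm j ≠ Fin.cast hlen.symm k := by
      intro hc; exact hj (by simpa [Fin.ext_iff] using congrArg Fin.val hc)
    obtain ⟨i, hi⟩ := Fin.exists_succAbove_eq hne
    refine ⟨i, ?_⟩
    simp only [hem]
    rw [hi]
    exact Fin.ext (by simp)
  exact DS_aux s L R (R.erase 1) em hget k hk1 hs hinj hnk hsurj hlr hr h


end
end

section
/- Let G be a strongly antimagic finite simple connected graph and let k be a positive integer. Let V_k = {v ∈ V(G) : deg(v) = k}, and form a new graph G' from G by attaching one new pendant edge (with a new endpoint) to each vertex of V_k. Then G' is strongly antimagic. -/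
open Classical

noncomputable section

/-- The graph obtained from `G` by attaching one new pendant edge (with a new endpoint)
to each vertex of degree exactly `k`. -/
def attachAtDegree {V : Type*} [Fintype V] (G : SimpleGraph V) (k : ℕ) :
    SimpleGraph (V ⊕ {v : V // G.degree v = k}) :=
  SimpleGraph.fromRel fun x y =>
    (∃ a b : V, x = Sum.inl a ∧ y = Sum.inl b ∧ G.Adj a b) ∨
    (∃ a : {v : V // G.degree v = k}, x = Sum.inl a.1 ∧ y = Sum.inr a)

namespace AttachAux
variable {V : Type*} [Fintype V]

lemma incidenceFinset_eq_image (G : SimpleGraph V) (u : V) :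
    G.incidenceFinset u = (G.neighborFinset u).image (fun w => s(u, w)) := by
  classical
  ext e
  induction e using Sym2.ind with
  | _ x y =>
    simp only [SimpleGraph.mem_incidenceFinset, SimpleGraph.incidenceSet, Set.mem_setOf_eq,
      Finset.mem_image, SimpleGraph.mem_neighborFinset, SimpleGraph.mem_edgeSet,
      Sym2.mem_iff, Sym2.eq_iff]
    constructor
    · rintro ⟨hadj, (rfl | rfl)⟩
      · exact ⟨y, hadj, Or.inl ⟨rfl, rfl⟩⟩
      · exact ⟨x, hadj.symm, Or.inr ⟨rfl, rfl⟩⟩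
    · rintro ⟨w, hw, (⟨rfl, rfl⟩ | ⟨rfl, rfl⟩)⟩
      · exact ⟨hw, Or.inl rfl⟩
      · exact ⟨hw.symm, Or.inr rfl⟩

lemma vertexSum_eq_sum_nbhd (G : SimpleGraph V) (f : Sym2 V → ℕ) (u : V) :
    vertexSum G f u = ∑ w ∈ G.neighborFinset u, f s(u, w) := by
  classical
  rw [vertexSum, incidenceFinset_eq_image]
  rw [Finset.sum_image]
  intro a _ b _ hab
  exact Sym2.congr_right.mp hab

variable (G : SimpleGraph V) (k : ℕ)

lemma adj_inl_inl {v w : V} :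
    (attachAtDegree G k).Adj (Sum.inl v) (Sum.inl w) ↔ G.Adj v w := by
  simp only [attachAtDegree, SimpleGraph.fromRel_adj]
  constructor
  · rintro ⟨hne, (⟨a, b, ha, hb, hab⟩ | ⟨a, ha, hb⟩) | (⟨a, b, ha, hb, hab⟩ | ⟨a, ha, hb⟩)⟩
    · cases ha; cases hb; simp_all
    · cases hb
    · cases ha; cases hb; simp_all; exact hab.symm
    · cases hb
  · intro hadj
    exact ⟨by simpa using hadj.ne, Or.inl (Or.inl ⟨v, w, rfl, rfl, hadj⟩)⟩

lemma adj_inl_inr {v : V} {a : {v : V // G.degree v = k}} :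
    (attachAtDegree G k).Adj (Sum.inl v) (Sum.inr a) ↔ v = a.1 := by
  simp only [attachAtDegree, SimpleGraph.fromRel_adj]
  constructor
  · rintro ⟨hne, (⟨c, b, hc, hb, hcb⟩ | ⟨c, hc, hb⟩) | (⟨c, b, hc, hb, hcb⟩ | ⟨c, hc, hb⟩)⟩
    · cases hb
    · cases hc; cases hb; rfl
    · cases hc
    · cases hc
  · rintro rfl
    exact ⟨by simp, Or.inl (Or.inr ⟨a, rfl, rfl⟩)⟩

lemma adj_inr_inr {a b : {v : V // G.degree v = k}} :
    ¬ (attachAtDegree G k).Adj (Sum.inr a) (Sum.inr b) := by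
  simp only [attachAtDegree, SimpleGraph.fromRel_adj]
  rintro ⟨hne, (⟨c, d, hc, hd, hcd⟩ | ⟨c, hc, hd⟩) | (⟨c, d, hc, hd, hcd⟩ | ⟨c, hc, hd⟩)⟩
  · cases hc
  · cases hc
  · cases hc
  · cases hc

lemma nbhd_inl (v : V) :
    (attachAtDegree G k).neighborFinset (Sum.inl v) =
      ((G.neighborFinset v).image Sum.inl) ∪
        (if h : G.degree v = k then {Sum.inr ⟨v, h⟩} else ∅) := by
  classical
  ext x
  cases x with
  | inl w =>
    simp only [SimpleGraph.mem_neighborFinset, Finset.mem_union, Finset.mem_image]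
    rw [adj_inl_inl]
    constructor
    · intro hadj
      exact Or.inl ⟨w, by simpa using hadj, rfl⟩
    · rintro (⟨u, hu, he⟩ | hmem)
      · cases he; simpa using hu
      · split_ifs at hmem with h <;> simp at hmem
  | inr a =>
    simp only [SimpleGraph.mem_neighborFinset, Finset.mem_union, Finset.mem_image]
    rw [adj_inl_inr]
    constructor
    · rintro rfl
      refine Or.inr ?_
      rw [dif_pos a.2]
      simp
    · rintro (⟨u, hu, he⟩ | hmem)
      · cases he
      · split_ifs at hmem with h
        · simp at hmem; cases hmem; rfl
        · simp at hmem

lemma nbhd_inr (a : {v : V // G.degree v = k}) :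
    (attachAtDegree G k).neighborFinset (Sum.inr a) = {Sum.inl a.1} := by
  classical
  ext x
  cases x with
  | inl w =>
    simp only [SimpleGraph.mem_neighborFinset, Finset.mem_singleton]
    rw [(attachAtDegree G k).adj_comm, adj_inl_inr]
    constructor
    · rintro rfl; rfl
    · rintro h; cases h; rfl
  | inr b =>
    simp only [SimpleGraph.mem_neighborFinset, Finset.mem_singleton]
    constructor
    · intro hadj; exact absurd hadj (adj_inr_inr G k)
    · intro h; cases h

lemma degree_inl (v : V) :
    (attachAtDegree G k).degree (Sum.inl v) =
      G.degree v + (if G.degree v = k then 1 else 0) := by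
  classical
  rw [← SimpleGraph.card_neighborFinset_eq_degree, nbhd_inl]
  rw [Finset.card_union_of_disjoint]
  · congr 1
    · rw [Finset.card_image_of_injective _ Sum.inl_injective]
      exact SimpleGraph.card_neighborFinset_eq_degree G v
    · split_ifs with h <;> simp
  · split_ifs with h
    · simp only [Finset.disjoint_singleton_right, Finset.mem_image]
      rintro ⟨u, _, he⟩; cases he
    · simp

lemma degree_inr (a : {v : V // G.degree v = k}) :
    (attachAtDegree G k).degree (Sum.inr a) = 1 := by
  classical
  rw [← SimpleGraph.card_neighborFinset_eq_degree, nbhd_inr]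
  simp

lemma edgeSet_attach (e : Sym2 (V ⊕ {v : V // G.degree v = k})) :
    e ∈ (attachAtDegree G k).edgeSet ↔
      (∃ e' ∈ G.edgeSet, e = Sym2.map Sum.inl e') ∨
        ∃ a : {v : V // G.degree v = k}, e = s(Sum.inl a.1, Sum.inr a) := by
  induction e using Sym2.ind with
  | _ x y =>
    rw [SimpleGraph.mem_edgeSet]
    cases x with
    | inl v =>
      cases y with
      | inl w =>
        rw [adj_inl_inl]
        constructor
        · intro hadj
          exact Or.inl ⟨s(v, w), hadj, by rw [Sym2.map_pair_eq]⟩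
        · rintro (⟨e', he', heq⟩ | ⟨a, heq⟩)
          · induction e' using Sym2.ind with
            | _ c d =>
              rw [Sym2.map_pair_eq, Sym2.eq_iff] at heq
              rcases heq with ⟨h1, h2⟩ | ⟨h1, h2⟩ <;> cases h1 <;> cases h2
              · exact he'
              · exact he'.symm
          · rw [Sym2.eq_iff] at heq
            rcases heq with ⟨h1, h2⟩ | ⟨h1, h2⟩
            · cases h2
            · cases h1
      | inr a =>
        rw [adj_inl_inr]
        constructor
        · rintro rfl
          exact Or.inr ⟨a, rfl⟩
        · rintro (⟨e', he', heq⟩ | ⟨b, heq⟩)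
          · exfalso
            have : Sum.inr a ∈ Sym2.map Sum.inl e' := heq ▸ (by simp)
            rw [Sym2.mem_map] at this
            obtain ⟨c, _, hc⟩ := this
            cases hc
          · rw [Sym2.eq_iff] at heq
            rcases heq with ⟨h1, h2⟩ | ⟨h1, h2⟩
            · cases h2; exact Sum.inl_injective h1
            · cases h1
    | inr a =>
      cases y with
      | inl v =>
        rw [(attachAtDegree G k).adj_comm, adj_inl_inr]
        constructor
        · rintro rfl
          exact Or.inr ⟨a, Sym2.eq_swap⟩
        · rintro (⟨e', he', heq⟩ | ⟨b, heq⟩)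
          · exfalso
            have : Sum.inr a ∈ Sym2.map Sum.inl e' := heq ▸ (by simp)
            rw [Sym2.mem_map] at this
            obtain ⟨c, _, hc⟩ := this
            cases hc
          · rw [Sym2.eq_iff] at heq
            rcases heq with ⟨h1, h2⟩ | ⟨h1, h2⟩
            · cases h1
            · cases h2; cases Sum.inr_injective h1; rfl
      | inr b =>
        constructor
        · intro hadj; exact absurd hadj (adj_inr_inr G k)
        · rintro (⟨e', he', heq⟩ | ⟨c, heq⟩)
          · exfalso
            have : Sum.inr a ∈ Sym2.map Sum.inl e' := heq ▸ (by simp)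
            rw [Sym2.mem_map] at this
            obtain ⟨d, _, hd⟩ := this
            cases hd
          · exfalso
            rw [Sym2.eq_iff] at heq
            rcases heq with ⟨h1, h2⟩ | ⟨h1, h2⟩
            · cases h1
            · cases h2

lemma pend_injective :
    Function.Injective (fun a : {v : V // G.degree v = k} => s(Sum.inl a.1, Sum.inr a)) := by
  intro a b hab
  simp only [Sym2.eq_iff] at hab
  rcases hab with ⟨h1, h2⟩ | ⟨h1, h2⟩
  · exact Sum.inr_injective h2
  · cases h1

lemma card_edgeFinset_attach :
    (attachAtDegree G k).edgeFinset.card =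
      G.edgeFinset.card + Fintype.card {v : V // G.degree v = k} := by
  classical
  have hset : (attachAtDegree G k).edgeFinset =
      G.edgeFinset.image (Sym2.map Sum.inl) ∪
        Finset.univ.image (fun a : {v : V // G.degree v = k} => s(Sum.inl a.1, Sum.inr a)) := by
    ext e
    simp only [SimpleGraph.mem_edgeFinset, Finset.mem_union, Finset.mem_image,
      Finset.mem_univ, true_and, edgeSet_attach]
    constructor
    · rintro (⟨e', he', heq⟩ | ⟨a, heq⟩)
      · exact Or.inl ⟨e', he', heq.symm⟩
      · exact Or.inr ⟨a, heq.symm⟩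
    · rintro (⟨e', he', heq⟩ | ⟨a, heq⟩)
      · exact Or.inl ⟨e', he', heq.symm⟩
      · exact Or.inr ⟨a, heq.symm⟩
  rw [hset, Finset.card_union_of_disjoint]
  · rw [Finset.card_image_of_injective _ (Sym2.map.injective Sum.inl_injective),
      Finset.card_image_of_injective _ (pend_injective G k)]
    simp
  · rw [Finset.disjoint_left]
    intro e he1 he2
    rw [Finset.mem_image] at he1 he2
    obtain ⟨e', _, heq⟩ := he1
    obtain ⟨a, _, heq2⟩ := he2
    subst heq
    have : Sum.inr a ∈ Sym2.map Sum.inl e' := heq2 ▸ (by simp)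
    rw [Sym2.mem_map] at this
    obtain ⟨c, _, hc⟩ := this
    cases hc

variable (f : Sym2 V → ℕ)

def ell (a : {v : V // G.degree v = k}) : ℕ :=
  (Finset.univ.filter fun b : {v : V // G.degree v = k} =>
    vertexSum G f b.1 < vertexSum G f a.1).card + 1

lemma ell_pos (a : {v : V // G.degree v = k}) : 1 ≤ ell G k f a := Nat.le_add_left 1 _

lemma ell_le (a : {v : V // G.degree v = k}) :
    ell G k f a ≤ Fintype.card {v : V // G.degree v = k} := by
  classical
  have h : (Finset.univ.filter fun b : {v : V // G.degree v = k} =>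
      vertexSum G f b.1 < vertexSum G f a.1) ⊂ Finset.univ := by
    rw [Finset.ssubset_univ_iff]
    intro he
    have := he ▸ Finset.mem_univ a
    simp at this
  have := Finset.card_lt_card h
  simp only [Finset.card_univ] at this
  unfold ell
  omega

lemma ell_strictMono {a b : {v : V // G.degree v = k}}
    (hab : vertexSum G f a.1 < vertexSum G f b.1) : ell G k f a < ell G k f b := by
  classical
  have hsub : (Finset.univ.filter fun c : {v : V // G.degree v = k} =>
      vertexSum G f c.1 < vertexSum G f a.1) ⊂
      (Finset.univ.filter fun c : {v : V // G.degree v = k} =>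
      vertexSum G f c.1 < vertexSum G f b.1) := by
    rw [Finset.ssubset_iff_of_subset]
    · exact ⟨a, by simpa using hab, by simp⟩
    · intro x hx
      simp only [Finset.mem_filter, Finset.mem_univ, true_and] at hx ⊢
      omega
  have := Finset.card_lt_card hsub
  unfold ell
  omega

lemma ell_injective (hinj : Function.Injective (vertexSum G f)) :
    Function.Injective (ell G k f) := by
  intro a b hab
  rcases lt_trichotomy (vertexSum G f a.1) (vertexSum G f b.1) with h | h | h
  · exact absurd hab (ell_strictMono G k f h).ne
  · exact Subtype.ext (hinj h)
  · exact absurd hab.symm (ell_strictMono G k f h).ne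

lemma ell_surj (hinj : Function.Injective (vertexSum G f)) (n : ℕ) (h1 : 1 ≤ n)
    (h2 : n ≤ Fintype.card {v : V // G.degree v = k}) :
    ∃ a, ell G k f a = n := by
  classical
  have himg : Finset.univ.image (ell G k f) =
      Finset.Icc 1 (Fintype.card {v : V // G.degree v = k}) := by
    apply Finset.eq_of_subset_of_card_le
    · intro x hx
      simp only [Finset.mem_image, Finset.mem_univ, true_and] at hx
      obtain ⟨a, rfl⟩ := hx
      rw [Finset.mem_Icc]
      exact ⟨ell_pos G k f a, ell_le G k f a⟩
    · rw [Finset.card_image_of_injective _ (ell_injective G k f hinj), Finset.card_univ,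
        Nat.card_Icc]
      omega
  have : n ∈ Finset.univ.image (ell G k f) := by
    rw [himg, Finset.mem_Icc]; exact ⟨h1, h2⟩
  simpa using this

def lab (e : Sym2 (V ⊕ {v : V // G.degree v = k})) : ℕ :=
  if he : ∃ e' ∈ G.edgeSet, e = Sym2.map Sum.inl e' then
    f he.choose + Fintype.card {v : V // G.degree v = k}
  else if hs : ∃ a : {v : V // G.degree v = k}, e = s(Sum.inl a.1, Sum.inr a) then
    ell G k f hs.choose
  else 0

lemma lab_old {e' : Sym2 V} (he' : e' ∈ G.edgeSet) :
    lab G k f (Sym2.map Sum.inl e') = f e' + Fintype.card {v : V // G.degree v = k} := by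
  have hex : ∃ e'' ∈ G.edgeSet,
      Sym2.map (Sum.inl : V → V ⊕ {v : V // G.degree v = k}) e' = Sym2.map Sum.inl e'' :=
    ⟨e', he', rfl⟩
  rw [lab, dif_pos hex]
  congr 1
  have hspec := hex.choose_spec
  have : e' = hex.choose := Sym2.map.injective Sum.inl_injective hspec.2
  exact congrArg f this.symm

lemma lab_pend (a : {v : V // G.degree v = k}) :
    lab G k f s(Sum.inl a.1, Sum.inr a) = ell G k f a := by
  have hne : ¬ ∃ e'' ∈ G.edgeSet, s(Sum.inl a.1, Sum.inr a) = Sym2.map Sum.inl e'' := by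
    rintro ⟨e'', _, heq⟩
    have : Sum.inr a ∈ Sym2.map Sum.inl e'' := heq ▸ (by simp)
    rw [Sym2.mem_map] at this
    obtain ⟨c, _, hc⟩ := this
    cases hc
  have hex : ∃ b : {v : V // G.degree v = k},
      s(Sum.inl a.1, Sum.inr a) = s(Sum.inl b.1, Sum.inr b) := ⟨a, rfl⟩
  rw [lab, dif_neg hne, dif_pos hex]
  congr 1
  have hspec := hex.choose_spec
  rw [Sym2.eq_iff] at hspec
  rcases hspec with ⟨h1, h2⟩ | ⟨h1, h2⟩
  · exact (Sum.inr_injective h2).symm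
  · cases h1

lemma vsum_inr (a : {v : V // G.degree v = k}) :
    vertexSum (attachAtDegree G k) (lab G k f) (Sum.inr a) = ell G k f a := by
  rw [vertexSum_eq_sum_nbhd, nbhd_inr, Finset.sum_singleton]
  rw [Sym2.eq_swap]
  exact lab_pend G k f a

lemma vsum_inl (v : V) :
    vertexSum (attachAtDegree G k) (lab G k f) (Sum.inl v) =
      vertexSum G f v + G.degree v * Fintype.card {v : V // G.degree v = k} +
        (if h : G.degree v = k then ell G k f ⟨v, h⟩ else 0) := by
  classical
  rw [vertexSum_eq_sum_nbhd, nbhd_inl]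
  rw [Finset.sum_union]
  · congr 1
    · rw [Finset.sum_image (by intro a _ b _ h; exact Sum.inl_injective h)]
      have hsum : ∀ w ∈ G.neighborFinset v,
          lab G k f s(Sum.inl v, Sum.inl w) = f s(v, w) + Fintype.card {v : V // G.degree v = k} := by
        intro w hw
        rw [SimpleGraph.mem_neighborFinset] at hw
        have : (s(Sum.inl v, Sum.inl w) : Sym2 (V ⊕ {v : V // G.degree v = k})) =
            Sym2.map Sum.inl s(v, w) := by rw [Sym2.map_pair_eq]
        rw [this, lab_old G k f hw]
      rw [Finset.sum_congr rfl hsum, Finset.sum_add_distrib, Finset.sum_const, smul_eq_mul,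
        SimpleGraph.card_neighborFinset_eq_degree, ← vertexSum_eq_sum_nbhd]
    · by_cases h : G.degree v = k
      · rw [dif_pos h, dif_pos h, Finset.sum_singleton]
        exact lab_pend G k f ⟨v, h⟩
      · rw [dif_neg h, dif_neg h, Finset.sum_empty]
  · by_cases h : G.degree v = k
    · rw [dif_pos h]
      simp only [Finset.disjoint_singleton_right, Finset.mem_image]
      rintro ⟨u, _, he⟩; cases he
    · rw [dif_neg h]; simp

end AttachAux

open AttachAux

/-- Let `G` be a strongly antimagic finite simple connected graph and
`k` a positive integer. Then the graph obtained from `G` by attaching one new pendant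
edge to each vertex of degree exactly `k` is strongly antimagic. -/
theorem attachAtDegree_isStronglyAntimagic {V : Type*} [Fintype V] (G : SimpleGraph V)
    (k : ℕ) (hk : 0 < k) (hconn : G.Connected) (h : IsStronglyAntimagic G) :
    IsStronglyAntimagic (attachAtDegree G k) := by
  classical
  obtain ⟨f, hbij, hinj, hmono⟩ := h
  have hf_mem : ∀ e ∈ G.edgeSet, 1 ≤ f e ∧ f e ≤ (G.edgeFinset.card) := by
    intro e he
    have := hbij.1 he
    rwa [Set.mem_Icc] at this
  have hφdeg : ∀ v : V, G.degree v ≤ vertexSum G f v := by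
    intro v
    have h1 : (G.incidenceFinset v).card • 1 ≤ ∑ e ∈ G.incidenceFinset v, f e := by
      apply Finset.card_nsmul_le_sum
      intro e he
      rw [SimpleGraph.mem_incidenceFinset] at he
      exact (hf_mem e (G.incidenceSet_subset v he)).1
    rw [smul_eq_mul, mul_one, SimpleGraph.card_incidenceFinset_eq_degree] at h1
    exact h1
  have hφ0 : ∀ v : V, G.degree v = 0 → vertexSum G f v = 0 := by
    intro v hv
    have hempty : G.incidenceFinset v = ∅ := by
      apply Finset.card_eq_zero.mp
      rw [SimpleGraph.card_incidenceFinset_eq_degree]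
      exact hv
    rw [vertexSum, hempty, Finset.sum_empty]
  refine ⟨lab G k f, ?_, ?_, ?_⟩
  · -- bijectivity of the labeling
    have hcard : (attachAtDegree G k).edgeFinset.card = (G.edgeFinset.card) + (Fintype.card {v : V // G.degree v = k}) := card_edgeFinset_attach G k
    rw [hcard]
    refine ⟨?_, ?_, ?_⟩
    · -- MapsTo
      intro e he
      rw [edgeSet_attach] at he
      rcases he with ⟨e', he', rfl⟩ | ⟨a, rfl⟩
      · rw [lab_old G k f he', Set.mem_Icc]
        have := hf_mem e' he'
        omega
      · rw [lab_pend, Set.mem_Icc]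
        have h1 := ell_pos G k f a
        have h2 := ell_le G k f a
        omega
    · -- InjOn
      intro e1 he1 e2 he2 heq
      rw [edgeSet_attach] at he1 he2
      rcases he1 with ⟨e1', he1', rfl⟩ | ⟨a, rfl⟩ <;>
        rcases he2 with ⟨e2', he2', rfl⟩ | ⟨b, rfl⟩
      · rw [lab_old G k f he1', lab_old G k f he2'] at heq
        have : f e1' = f e2' := by omega
        rw [hbij.2.1 he1' he2' this]
      · rw [lab_old G k f he1', lab_pend] at heq
        have h1 := (hf_mem e1' he1').1
        have h2 := ell_le G k f b
        omega
      · rw [lab_pend, lab_old G k f he2'] at heq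
        have h1 := (hf_mem e2' he2').1
        have h2 := ell_le G k f a
        omega
      · rw [lab_pend, lab_pend] at heq
        rw [ell_injective G k f hinj heq]
    · -- SurjOn
      intro n hn
      rw [Set.mem_Icc] at hn
      by_cases hnt : n ≤ (Fintype.card {v : V // G.degree v = k})
      · obtain ⟨a, ha⟩ := ell_surj G k f hinj n hn.1 hnt
        refine ⟨s(Sum.inl a.1, Sum.inr a), ?_, ?_⟩
        · rw [edgeSet_attach]
          exact Or.inr ⟨a, rfl⟩
        · rw [lab_pend]; exact ha
      · push_neg at hnt
        have hsub : n - (Fintype.card {v : V // G.degree v = k}) ∈ Set.Icc 1 (G.edgeFinset.card) := by rw [Set.mem_Icc]; omega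
        obtain ⟨e', he', hfe⟩ := hbij.2.2 hsub
        refine ⟨Sym2.map Sum.inl e', ?_, ?_⟩
        · rw [edgeSet_attach]
          exact Or.inl ⟨e', he', rfl⟩
        · rw [lab_old G k f he', hfe]
          omega
  · -- injectivity of vertex sums
    have key : ∀ x y, (attachAtDegree G k).degree x < (attachAtDegree G k).degree y →
        vertexSum (attachAtDegree G k) (lab G k f) x <
          vertexSum (attachAtDegree G k) (lab G k f) y := by
      intro x y hd
      cases x with
      | inl u =>
        cases y with
        | inl v =>
          rw [degree_inl, degree_inl] at hd
          rw [vsum_inl, vsum_inl]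
          by_cases hu : G.degree u = k <;> by_cases hv : G.degree v = k
          · rw [if_pos hu, if_pos hv] at hd; omega
          · rw [if_pos hu, if_neg hv] at hd
            rw [dif_pos hu, dif_neg hv]
            have hφ : vertexSum G f u < vertexSum G f v := hmono u v (by omega)
            have h1 : ell G k f ⟨u, hu⟩ ≤ (Fintype.card {v : V // G.degree v = k}) := ell_le G k f _
            have h2 : (k + 1) * (Fintype.card {v : V // G.degree v = k}) ≤ G.degree v * (Fintype.card {v : V // G.degree v = k}) := Nat.mul_le_mul_right (Fintype.card {v : V // G.degree v = k}) (by omega)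
            have h3 : (k + 1) * (Fintype.card {v : V // G.degree v = k}) = k * (Fintype.card {v : V // G.degree v = k}) + (Fintype.card {v : V // G.degree v = k}) := by ring
            rw [hu]
            omega
          · rw [if_neg hu, if_pos hv] at hd
            rw [dif_neg hu, dif_pos hv]
            have hφ : vertexSum G f u < vertexSum G f v := hmono u v (by omega)
            have h2 : G.degree u * (Fintype.card {v : V // G.degree v = k}) ≤ k * (Fintype.card {v : V // G.degree v = k}) := Nat.mul_le_mul_right (Fintype.card {v : V // G.degree v = k}) (by omega)
            rw [hv]
            omega
          · rw [if_neg hu, if_neg hv] at hd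
            rw [dif_neg hu, dif_neg hv]
            have hφ : vertexSum G f u < vertexSum G f v := hmono u v (by omega)
            have h2 : G.degree u * (Fintype.card {v : V // G.degree v = k}) ≤ G.degree v * (Fintype.card {v : V // G.degree v = k}) := Nat.mul_le_mul_right (Fintype.card {v : V // G.degree v = k}) (by omega)
            omega
        | inr a =>
          rw [degree_inl, degree_inr] at hd
          rw [vsum_inl, vsum_inr]
          have hu0 : G.degree u = 0 := by split_ifs at hd <;> omega
          have huk : ¬ G.degree u = k := by omega
          rw [dif_neg huk, hφ0 u hu0, hu0]
          have := ell_pos G k f a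
          omega
      | inr a =>
        cases y with
        | inl v =>
          rw [degree_inr, degree_inl] at hd
          rw [vsum_inr, vsum_inl]
          have h1 := ell_le G k f a
          have hφv := hφdeg v
          by_cases hv : G.degree v = k
          · rw [dif_pos hv]
            have h2 : 1 * (Fintype.card {v : V // G.degree v = k}) ≤ G.degree v * (Fintype.card {v : V // G.degree v = k}) := Nat.mul_le_mul_right (Fintype.card {v : V // G.degree v = k}) (by omega)
            have h3 := ell_pos G k f ⟨v, hv⟩
            omega
          · rw [dif_neg hv]
            rw [if_neg hv] at hd
            have h2 : 1 * (Fintype.card {v : V // G.degree v = k}) ≤ G.degree v * (Fintype.card {v : V // G.degree v = k}) := Nat.mul_le_mul_right (Fintype.card {v : V // G.degree v = k}) (by omega)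
            omega
        | inr b =>
          rw [degree_inr, degree_inr] at hd
          omega
    intro x y heq
    have hdeg : (attachAtDegree G k).degree x = (attachAtDegree G k).degree y := by
      rcases lt_trichotomy ((attachAtDegree G k).degree x) ((attachAtDegree G k).degree y)
        with hlt | he | hlt
      · exact absurd heq (key x y hlt).ne
      · exact he
      · exact absurd heq.symm (key y x hlt).ne
    cases x with
    | inl u =>
      cases y with
      | inl v =>
        rw [degree_inl, degree_inl] at hdeg
        rw [vsum_inl, vsum_inl] at heq
        by_cases hu : G.degree u = k <;> by_cases hv : G.degree v = k
        · rw [dif_pos hu, dif_pos hv] at heq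
          have hdd : G.degree u = G.degree v := by rw [hu, hv]
          rw [hu, hv] at heq
          have huv : u = v := by
            by_contra hne
            rcases lt_trichotomy (vertexSum G f u) (vertexSum G f v) with hlt | he | hlt
            · have := ell_strictMono G k f (a := ⟨u, hu⟩) (b := ⟨v, hv⟩) hlt
              omega
            · exact hne (hinj he)
            · have := ell_strictMono G k f (a := ⟨v, hv⟩) (b := ⟨u, hu⟩) hlt
              omega
          rw [huv]
        · exfalso
          rw [if_pos hu, if_neg hv] at hdeg
          rw [dif_pos hu, dif_neg hv] at heq
          have hφ : vertexSum G f u < vertexSum G f v := hmono u v (by omega)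
          have h1 : ell G k f ⟨u, hu⟩ ≤ (Fintype.card {v : V // G.degree v = k}) := ell_le G k f _
          have h2 : G.degree v * (Fintype.card {v : V // G.degree v = k}) = k * (Fintype.card {v : V // G.degree v = k}) + (Fintype.card {v : V // G.degree v = k}) := by
            have : G.degree v = k + 1 := by omega
            rw [this]; ring
          rw [hu] at heq
          omega
        · exfalso
          rw [if_neg hu, if_pos hv] at hdeg
          rw [dif_neg hu, dif_pos hv] at heq
          have hφ : vertexSum G f v < vertexSum G f u := hmono v u (by omega)
          have h1 : ell G k f ⟨v, hv⟩ ≤ (Fintype.card {v : V // G.degree v = k}) := ell_le G k f _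
          have h2 : G.degree u * (Fintype.card {v : V // G.degree v = k}) = k * (Fintype.card {v : V // G.degree v = k}) + (Fintype.card {v : V // G.degree v = k}) := by
            have : G.degree u = k + 1 := by omega
            rw [this]; ring
          rw [hv] at heq
          omega
        · rw [if_neg hu, if_neg hv] at hdeg
          rw [dif_neg hu, dif_neg hv] at heq
          have hdd : G.degree u = G.degree v := by omega
          rw [hdd] at heq
          have : vertexSum G f u = vertexSum G f v := by omega
          rw [hinj this]
      | inr a =>
        exfalso
        rw [degree_inl, degree_inr] at hdeg
        rw [vsum_inl, vsum_inr] at heq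
        have hvk : ¬ G.degree u = k := by
          intro hc
          rw [if_pos hc] at hdeg
          omega
        rw [if_neg hvk] at hdeg
        rw [dif_neg hvk] at heq
        have hd1 : G.degree u = 1 := by omega
        have hφu := hφdeg u
        have h1 := ell_le G k f a
        rw [hd1] at heq hφu
        omega
    | inr a =>
      cases y with
      | inl v =>
        exfalso
        rw [degree_inr, degree_inl] at hdeg
        rw [vsum_inr, vsum_inl] at heq
        have hvk : ¬ G.degree v = k := by
          intro hc
          rw [if_pos hc] at hdeg
          omega
        rw [if_neg hvk] at hdeg
        rw [dif_neg hvk] at heq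
        have hd1 : G.degree v = 1 := by omega
        have hφv := hφdeg v
        have h1 := ell_le G k f a
        rw [hd1] at heq hφv
        omega
      | inr b =>
        rw [vsum_inr, vsum_inr] at heq
        rw [ell_injective G k f hinj heq]
  · -- monotonicity
    intro x y hd
    -- reuse the key argument
    cases x with
    | inl u =>
      cases y with
      | inl v =>
        rw [degree_inl, degree_inl] at hd
        rw [vsum_inl, vsum_inl]
        by_cases hu : G.degree u = k <;> by_cases hv : G.degree v = k
        · rw [if_pos hu, if_pos hv] at hd; omega
        · rw [if_pos hu, if_neg hv] at hd
          rw [dif_pos hu, dif_neg hv]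
          have hφ : vertexSum G f u < vertexSum G f v := hmono u v (by omega)
          have h1 : ell G k f ⟨u, hu⟩ ≤ (Fintype.card {v : V // G.degree v = k}) := ell_le G k f _
          have h2 : (k + 1) * (Fintype.card {v : V // G.degree v = k}) ≤ G.degree v * (Fintype.card {v : V // G.degree v = k}) := Nat.mul_le_mul_right (Fintype.card {v : V // G.degree v = k}) (by omega)
          have h3 : (k + 1) * (Fintype.card {v : V // G.degree v = k}) = k * (Fintype.card {v : V // G.degree v = k}) + (Fintype.card {v : V // G.degree v = k}) := by ring
          rw [hu]
          omega
        · rw [if_neg hu, if_pos hv] at hd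
          rw [dif_neg hu, dif_pos hv]
          have hφ : vertexSum G f u < vertexSum G f v := hmono u v (by omega)
          have h2 : G.degree u * (Fintype.card {v : V // G.degree v = k}) ≤ k * (Fintype.card {v : V // G.degree v = k}) := Nat.mul_le_mul_right (Fintype.card {v : V // G.degree v = k}) (by omega)
          rw [hv]
          omega
        · rw [if_neg hu, if_neg hv] at hd
          rw [dif_neg hu, dif_neg hv]
          have hφ : vertexSum G f u < vertexSum G f v := hmono u v (by omega)
          have h2 : G.degree u * (Fintype.card {v : V // G.degree v = k}) ≤ G.degree v * (Fintype.card {v : V // G.degree v = k}) := Nat.mul_le_mul_right (Fintype.card {v : V // G.degree v = k}) (by omega)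
          omega
      | inr a =>
        rw [degree_inl, degree_inr] at hd
        rw [vsum_inl, vsum_inr]
        have hu0 : G.degree u = 0 := by split_ifs at hd <;> omega
        have huk : ¬ G.degree u = k := by omega
        rw [dif_neg huk, hφ0 u hu0, hu0]
        have := ell_pos G k f a
        omega
    | inr a =>
      cases y with
      | inl v =>
        rw [degree_inr, degree_inl] at hd
        rw [vsum_inr, vsum_inl]
        have h1 := ell_le G k f a
        have hφv := hφdeg v
        by_cases hv : G.degree v = k
        · rw [dif_pos hv]
          have h2 : 1 * (Fintype.card {v : V // G.degree v = k}) ≤ G.degree v * (Fintype.card {v : V // G.degree v = k}) := Nat.mul_le_mul_right (Fintype.card {v : V // G.degree v = k}) (by omega)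
          have h3 := ell_pos G k f ⟨v, hv⟩
          omega
        · rw [dif_neg hv]
          rw [if_neg hv] at hd
          have h2 : 1 * (Fintype.card {v : V // G.degree v = k}) ≤ G.degree v * (Fintype.card {v : V // G.degree v = k}) := Nat.mul_le_mul_right (Fintype.card {v : V // G.degree v = k}) (by omega)
          omega
      | inr b =>
        rw [degree_inr, degree_inr] at hd
        omega

end
end

section
/- For every integer s ≥ 1, the double spider DS(L, P^core, R) in which L consists of two paths of length 1, R consists of two paths of length 1, and the core path P^core has length s (so both branch vertices have degree 3 and the tree has s+4 edges) is strongly antimagic. -/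
open Classical

noncomputable section

abbrev LegT : Type := (i : Fin ([1,1] : List ℕ).length) × Fin (([1,1] : List ℕ).get i)
lemma leg_get (i : Fin ([1,1] : List ℕ).length) : ([1,1] : List ℕ).get i = 1 := by
  fin_cases i <;> rfl
lemma leg_snd_zero (p : LegT) : (p.2 : ℕ) = 0 := by
  have h1 := p.2.isLt; have h2 := leg_get p.1; omega
def lleaf (i : Fin 2) : LegT := ⟨i, ⟨0, by rw [leg_get]; norm_num⟩⟩

lemma leg_eq_of_fst {p q : LegT} (h : p.1 = q.1) : p = q := by
  obtain ⟨i, x⟩ := p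
  obtain ⟨j, y⟩ := q
  dsimp at h
  subst h
  have hx : (x : ℕ) = 0 := leg_snd_zero ⟨i, x⟩
  have hy : (y : ℕ) = 0 := leg_snd_zero ⟨i, y⟩
  congr 1
  exact Fin.ext (by omega)

lemma leg_eq_lleaf (p : LegT) : p = lleaf p.1 := leg_eq_of_fst rfl

abbrev DSV (s : ℕ) := DSVert s [1,1] [1,1]

variable {s : ℕ}

def ce (j : Fin s) : Sym2 (DSV s) := s(Sum.inl j.castSucc, Sum.inl j.succ)
def le' (i : Fin 2) : Sym2 (DSV s) := s(Sum.inl 0, Sum.inr (Sum.inl (lleaf i)))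
def re' (i : Fin 2) : Sym2 (DSV s) := s(Sum.inl (Fin.last s), Sum.inr (Sum.inr (lleaf i)))

def clab (s a : ℕ) : ℕ := if a % 2 = 0 then s/2 + 5 + a/2 else (a+1)/2

def dlab (s : ℕ) : DSV s → DSV s → ℕ
  | Sum.inl a, Sum.inl b => if (b:ℕ) = (a:ℕ)+1 then clab s a else 0
  | Sum.inl a, Sum.inr (Sum.inl p) => if (a:ℕ) = 0 then (if (p.1:ℕ) = 0 then s/2+1 else s/2+3) else 0
  | Sum.inl a, Sum.inr (Sum.inr p) => if (a:ℕ) = s then (if (p.1:ℕ) = 0 then s/2+2 else s/2+4) else 0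
  | _, _ => 0

def flab (s : ℕ) : Sym2 (DSV s) → ℕ :=
  Sym2.lift ⟨fun x y => dlab s x y + dlab s y x, fun _ _ => by dsimp; ring⟩

lemma flab_mk (x y : DSV s) : flab s s(x, y) = dlab s x y + dlab s y x := rfl

lemma flab_ce (j : Fin s) : flab s (ce j) = clab s j := by
  rw [ce, flab_mk]
  have h1 : ((j.succ : Fin (s+1)) : ℕ) = (j.castSucc : ℕ) + 1 := by simp
  simp only [dlab, h1, if_pos rfl]
  rw [if_pos trivial, if_neg (by omega)]
  simp

lemma flab_le' (i : Fin 2) : flab s (le' i) = if (i:ℕ) = 0 then s/2+1 else s/2+3 := by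
  rw [le', flab_mk]
  simp [dlab, lleaf]

lemma flab_re' (i : Fin 2) : flab s (re' i) = if (i:ℕ) = 0 then s/2+2 else s/2+4 := by
  rw [re', flab_mk]
  simp [dlab, lleaf]
lemma adj_inl_inl (a b : Fin (s+1)) :
    (DoubleSpider s [1,1] [1,1]).Adj (Sum.inl a) (Sum.inl b) ↔
      (b : ℕ) = (a : ℕ) + 1 ∨ (a : ℕ) = (b : ℕ) + 1 := by
  rw [DoubleSpider, SimpleGraph.fromRel_adj]
  constructor
  · rintro ⟨-, h⟩; exact h
  · intro h
    refine ⟨?_, h⟩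
    intro hab
    injection hab with hab
    omega

lemma adj_inl_inrl (a : Fin (s+1)) (p : LegT) :
    (DoubleSpider s [1,1] [1,1]).Adj (Sum.inl a) (Sum.inr (Sum.inl p)) ↔ (a : ℕ) = 0 := by
  rw [DoubleSpider, SimpleGraph.fromRel_adj]
  constructor
  · rintro ⟨-, h | h⟩
    · exact h.1
    · exact absurd h id
  · intro h
    exact ⟨by simp, Or.inl ⟨h, leg_snd_zero p⟩⟩

lemma adj_inl_inrr (a : Fin (s+1)) (p : LegT) :
    (DoubleSpider s [1,1] [1,1]).Adj (Sum.inl a) (Sum.inr (Sum.inr p)) ↔ (a : ℕ) = s := by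
  rw [DoubleSpider, SimpleGraph.fromRel_adj]
  constructor
  · rintro ⟨-, h | h⟩
    · exact h.1
    · exact absurd h id
  · intro h
    exact ⟨by simp, Or.inl ⟨h, leg_snd_zero p⟩⟩

lemma not_adj_inrl_inrl (p q : LegT) :
    ¬ (DoubleSpider s [1,1] [1,1]).Adj (Sum.inr (Sum.inl p)) (Sum.inr (Sum.inl q)) := by
  rw [DoubleSpider, SimpleGraph.fromRel_adj]
  rintro ⟨-, h | h⟩
  · have := leg_snd_zero q; omega
  · have := leg_snd_zero p; omega

lemma not_adj_inrr_inrr (p q : LegT) :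
    ¬ (DoubleSpider s [1,1] [1,1]).Adj (Sum.inr (Sum.inr p)) (Sum.inr (Sum.inr q)) := by
  rw [DoubleSpider, SimpleGraph.fromRel_adj]
  rintro ⟨-, h | h⟩
  · have := leg_snd_zero q; omega
  · have := leg_snd_zero p; omega

lemma not_adj_inrl_inrr (p q : LegT) :
    ¬ (DoubleSpider s [1,1] [1,1]).Adj (Sum.inr (Sum.inl p)) (Sum.inr (Sum.inr q)) := by
  rw [DoubleSpider, SimpleGraph.fromRel_adj]
  rintro ⟨-, h | h⟩ <;> exact h

-- E : explicit edge finset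
def EF (s : ℕ) : Finset (Sym2 (DSV s)) :=
  (Finset.univ.image (ce (s := s))) ∪ (Finset.univ.image (le' (s := s))) ∪
    (Finset.univ.image (re' (s := s)))

lemma mem_EF (e : Sym2 (DSV s)) :
    e ∈ EF s ↔ (∃ j : Fin s, e = ce j) ∨ (∃ i : Fin 2, e = le' i) ∨ (∃ i : Fin 2, e = re' i) := by
  simp [EF, eq_comm, or_assoc]

lemma edgeFinset_eq : (DoubleSpider s [1,1] [1,1]).edgeFinset = EF s := by
  ext e
  induction e using Sym2.ind with
  | _ x y =>
  rw [SimpleGraph.mem_edgeFinset, SimpleGraph.mem_edgeSet, mem_EF]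
  constructor
  · intro h
    match x, y with
    | Sum.inl a, Sum.inl b =>
      rw [adj_inl_inl] at h
      rcases h with h | h
      · left
        have ha : (a : ℕ) < s := by have := b.isLt; omega
        have hx : (Sum.inl a : DSV s) = Sum.inl (⟨(a:ℕ), ha⟩ : Fin s).castSucc := by
          congr 1
        have hy : (Sum.inl b : DSV s) = Sum.inl (⟨(a:ℕ), ha⟩ : Fin s).succ := by
          congr 1; exact Fin.ext (by simp [h])
        exact ⟨⟨(a:ℕ), ha⟩, by rw [ce, hx, hy]⟩
      · left
        have hb : (b : ℕ) < s := by have := a.isLt; omega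
        have hx : (Sum.inl a : DSV s) = Sum.inl (⟨(b:ℕ), hb⟩ : Fin s).succ := by
          congr 1; exact Fin.ext (by simp [h])
        have hy : (Sum.inl b : DSV s) = Sum.inl (⟨(b:ℕ), hb⟩ : Fin s).castSucc := by
          congr 1
        exact ⟨⟨(b:ℕ), hb⟩, by rw [ce, hx, hy, Sym2.eq_swap]⟩
    | Sum.inl a, Sum.inr (Sum.inl p) =>
      rw [adj_inl_inrl] at h
      right; left
      have hx : (Sum.inl a : DSV s) = Sum.inl (0 : Fin (s+1)) := by
        congr 1; exact Fin.ext (by simpa using h)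
      have hp : (Sum.inr (Sum.inl p) : DSV s) = Sum.inr (Sum.inl (lleaf p.1)) := by
        rw [← leg_eq_lleaf p]
      exact ⟨p.1, by rw [le', hx, hp]⟩
    | Sum.inl a, Sum.inr (Sum.inr p) =>
      rw [adj_inl_inrr] at h
      right; right
      have hx : (Sum.inl a : DSV s) = Sum.inl (Fin.last s) := by
        congr 1; exact Fin.ext (by simpa using h)
      have hp : (Sum.inr (Sum.inr p) : DSV s) = Sum.inr (Sum.inr (lleaf p.1)) := by
        rw [← leg_eq_lleaf p]
      exact ⟨p.1, by rw [re', hx, hp]⟩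
    | Sum.inr (Sum.inl p), Sum.inl a =>
      rw [SimpleGraph.adj_comm, adj_inl_inrl] at h
      right; left
      have hx : (Sum.inl a : DSV s) = Sum.inl (0 : Fin (s+1)) := by
        congr 1; exact Fin.ext (by simpa using h)
      have hp : (Sum.inr (Sum.inl p) : DSV s) = Sum.inr (Sum.inl (lleaf p.1)) := by
        rw [← leg_eq_lleaf p]
      exact ⟨p.1, by rw [le', hx, hp, Sym2.eq_swap]⟩
    | Sum.inr (Sum.inr p), Sum.inl a =>
      rw [SimpleGraph.adj_comm, adj_inl_inrr] at h
      right; right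
      have hx : (Sum.inl a : DSV s) = Sum.inl (Fin.last s) := by
        congr 1; exact Fin.ext (by simpa using h)
      have hp : (Sum.inr (Sum.inr p) : DSV s) = Sum.inr (Sum.inr (lleaf p.1)) := by
        rw [← leg_eq_lleaf p]
      exact ⟨p.1, by rw [re', hx, hp, Sym2.eq_swap]⟩
    | Sum.inr (Sum.inl p), Sum.inr (Sum.inl q) => exact absurd h (not_adj_inrl_inrl p q)
    | Sum.inr (Sum.inr p), Sum.inr (Sum.inr q) => exact absurd h (not_adj_inrr_inrr p q)
    | Sum.inr (Sum.inl p), Sum.inr (Sum.inr q) => exact absurd h (not_adj_inrl_inrr p q)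
    | Sum.inr (Sum.inr p), Sum.inr (Sum.inl q) =>
      rw [SimpleGraph.adj_comm] at h
      exact absurd h (not_adj_inrl_inrr q p)
  · rintro (⟨j, hj⟩ | ⟨i, hi⟩ | ⟨i, hi⟩)
    · rw [← SimpleGraph.mem_edgeSet, hj, ce, SimpleGraph.mem_edgeSet, adj_inl_inl]
      left; simp
    · rw [← SimpleGraph.mem_edgeSet, hi, le', SimpleGraph.mem_edgeSet, adj_inl_inrl]
      simp
    · rw [← SimpleGraph.mem_edgeSet, hi, re', SimpleGraph.mem_edgeSet, adj_inl_inrr]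
      simp

-- distinctness of explicit edges
lemma lleaf_inj {i i' : Fin 2} (h : lleaf i = lleaf i') : i = i' := by
  have := congrArg Sigma.fst h
  exact this

lemma ce_inj {j j' : Fin s} (h : ce j = ce j') : j = j' := by
  rw [ce, ce, Sym2.eq_iff] at h
  rcases h with ⟨h1, h2⟩ | ⟨h1, h2⟩
  · injection h1 with h1
    exact Fin.ext (by simpa [Fin.ext_iff] using h1)
  · injection h1 with h1
    injection h2 with h2
    rw [Fin.ext_iff] at h1 h2
    simp at h1 h2
    exact Fin.ext (by omega)

lemma le'_inj {i i' : Fin 2} (h : le' (s := s) i = le' i') : i = i' := by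
  rw [le', le', Sym2.eq_iff] at h
  rcases h with ⟨-, h2⟩ | ⟨h1, -⟩
  · injection h2 with h2
    injection h2 with h2
    exact lleaf_inj h2
  · exact absurd h1 (by simp)

lemma re'_inj {i i' : Fin 2} (h : re' (s := s) i = re' i') : i = i' := by
  rw [re', re', Sym2.eq_iff] at h
  rcases h with ⟨-, h2⟩ | ⟨h1, -⟩
  · injection h2 with h2
    injection h2 with h2
    exact lleaf_inj h2
  · exact absurd h1 (by simp)

lemma ce_ne_le' (j : Fin s) (i : Fin 2) : ce j ≠ le' i := by
  rw [ce, le']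
  intro h
  rw [Sym2.eq_iff] at h
  rcases h with ⟨-, h⟩ | ⟨h, -⟩ <;> simp at h

lemma ce_ne_re' (j : Fin s) (i : Fin 2) : ce j ≠ re' i := by
  rw [ce, re']
  intro h
  rw [Sym2.eq_iff] at h
  rcases h with ⟨-, h⟩ | ⟨h, -⟩ <;> simp at h

lemma le'_ne_re' (i i' : Fin 2) : le' (s := s) i ≠ re' i' := by
  rw [le', re']
  intro h
  rw [Sym2.eq_iff] at h
  rcases h with ⟨-, h⟩ | ⟨h, -⟩ <;> simp at h

lemma mem_incidence [DecidableEq (DSV s)] (u : DSV s)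
    [Fintype ((DoubleSpider s [1,1] [1,1]).neighborSet u)] (e : Sym2 (DSV s)) :
    e ∈ (DoubleSpider s [1,1] [1,1]).incidenceFinset u ↔
      ((∃ j : Fin s, e = ce j) ∨ (∃ i : Fin 2, e = le' i) ∨ (∃ i : Fin 2, e = re' i)) ∧ u ∈ e := by
  rw [SimpleGraph.mem_incidenceFinset]
  have : e ∈ (DoubleSpider s [1,1] [1,1]).incidenceSet u ↔
      e ∈ (DoubleSpider s [1,1] [1,1]).edgeSet ∧ u ∈ e := Iff.rfl
  rw [this, ← SimpleGraph.mem_edgeFinset, edgeFinset_eq, mem_EF]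

lemma mem_ce (u : DSV s) (j : Fin s) :
    u ∈ ce j ↔ u = Sum.inl j.castSucc ∨ u = Sum.inl j.succ := Sym2.mem_iff

lemma mem_le' (u : DSV s) (i : Fin 2) :
    u ∈ le' i ↔ u = Sum.inl 0 ∨ u = Sum.inr (Sum.inl (lleaf i)) := Sym2.mem_iff

lemma mem_re' (u : DSV s) (i : Fin 2) :
    u ∈ re' i ↔ u = Sum.inl (Fin.last s) ∨ u = Sum.inr (Sum.inr (lleaf i)) := Sym2.mem_iff

lemma inc_v0 [DecidableEq (DSV s)] [Fintype ((DoubleSpider s [1,1] [1,1]).neighborSet (Sum.inl 0))] (hs : 0 < s) :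
    (DoubleSpider s [1,1] [1,1]).incidenceFinset (Sum.inl 0) =
      {ce ⟨0, hs⟩, le' 0, le' 1} := by
  ext e
  rw [mem_incidence]
  simp only [Finset.mem_insert, Finset.mem_singleton]
  constructor
  · rintro ⟨⟨j, rfl⟩ | ⟨i, rfl⟩ | ⟨i, rfl⟩, hu⟩
    · rw [mem_ce] at hu
      rcases hu with hu | hu
      · injection hu with hu
        left
        have hj : (j : ℕ) = 0 := by
          have := congrArg Fin.val hu; simpa using this.symm
        congr 1
        exact Fin.ext (by simpa using hj)
      · injection hu with hu
        have := congrArg Fin.val hu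
        simp at this
    · rw [mem_le'] at hu
      rcases hu with hu | hu
      · right
        fin_cases i
        · left; rfl
        · right; rfl
      · simp at hu
    · rw [mem_re'] at hu
      rcases hu with hu | hu
      · injection hu with hu
        have := congrArg Fin.val hu
        simp [Fin.last] at this
        omega
      · simp at hu
  · rintro (rfl | rfl | rfl)
    · exact ⟨Or.inl ⟨_, rfl⟩, by rw [mem_ce]; left; congr 1⟩
    · exact ⟨Or.inr (Or.inl ⟨_, rfl⟩), by rw [mem_le']; left; rfl⟩
    · exact ⟨Or.inr (Or.inl ⟨_, rfl⟩), by rw [mem_le']; left; rfl⟩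

lemma inc_vlast [DecidableEq (DSV s)] [Fintype ((DoubleSpider s [1,1] [1,1]).neighborSet (Sum.inl (Fin.last s)))] (hs : 0 < s) :
    (DoubleSpider s [1,1] [1,1]).incidenceFinset (Sum.inl (Fin.last s)) =
      {ce ⟨s - 1, by omega⟩, re' 0, re' 1} := by
  ext e
  rw [mem_incidence]
  simp only [Finset.mem_insert, Finset.mem_singleton]
  constructor
  · rintro ⟨⟨j, rfl⟩ | ⟨i, rfl⟩ | ⟨i, rfl⟩, hu⟩
    · rw [mem_ce] at hu
      rcases hu with hu | hu
      · injection hu with hu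
        have h1 := congrArg Fin.val hu
        have h2 := j.isLt
        simp [Fin.last] at h1
        omega
      · injection hu with hu
        left
        have h1 := congrArg Fin.val hu
        have h2 := j.isLt
        simp [Fin.last] at h1
        congr 1
        exact Fin.ext (by simp; omega)
    · rw [mem_le'] at hu
      rcases hu with hu | hu
      · injection hu with hu
        have h1 := congrArg Fin.val hu
        simp [Fin.last] at h1
        omega
      · simp at hu
    · rw [mem_re'] at hu
      rcases hu with hu | hu
      · right
        fin_cases i
        · left; rfl
        · right; rfl
      · simp at hu
  · rintro (rfl | rfl | rfl)
    · refine ⟨Or.inl ⟨_, rfl⟩, ?_⟩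
      rw [mem_ce]; right
      congr 1
      exact Fin.ext (by simp [Fin.last]; omega)
    · exact ⟨Or.inr (Or.inr ⟨_, rfl⟩), by rw [mem_re']; left; rfl⟩
    · exact ⟨Or.inr (Or.inr ⟨_, rfl⟩), by rw [mem_re']; left; rfl⟩

lemma inc_mid [DecidableEq (DSV s)] (a : Fin (s+1))
    [Fintype ((DoubleSpider s [1,1] [1,1]).neighborSet (Sum.inl a))]
    (h0 : 0 < (a : ℕ)) (h1 : (a : ℕ) < s) :
    (DoubleSpider s [1,1] [1,1]).incidenceFinset (Sum.inl a) =
      {ce ⟨(a : ℕ) - 1, by omega⟩, ce ⟨(a : ℕ), h1⟩} := by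
  ext e
  rw [mem_incidence]
  simp only [Finset.mem_insert, Finset.mem_singleton]
  constructor
  · rintro ⟨⟨j, rfl⟩ | ⟨i, rfl⟩ | ⟨i, rfl⟩, hu⟩
    · rw [mem_ce] at hu
      rcases hu with hu | hu
      · injection hu with hu
        right
        have := congrArg Fin.val hu
        simp at this
        congr 1
        exact Fin.ext (by simp; omega)
      · injection hu with hu
        left
        have := congrArg Fin.val hu
        simp at this
        congr 1
        exact Fin.ext (by simp; omega)
    · rw [mem_le'] at hu
      rcases hu with hu | hu
      · injection hu with hu
        have := congrArg Fin.val hu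
        simp at this
        rw [hu] at h0; simp at h0
      · simp at hu
    · rw [mem_re'] at hu
      rcases hu with hu | hu
      · injection hu with hu
        have := congrArg Fin.val hu
        simp [Fin.last] at this
        omega
      · simp at hu
  · rintro (rfl | rfl)
    · refine ⟨Or.inl ⟨_, rfl⟩, ?_⟩
      rw [mem_ce]; right
      congr 1
      exact Fin.ext (by simp; omega)
    · refine ⟨Or.inl ⟨_, rfl⟩, ?_⟩
      rw [mem_ce]; left
      congr 1

lemma inc_leafL [DecidableEq (DSV s)] (p : LegT)
    [Fintype ((DoubleSpider s [1,1] [1,1]).neighborSet (Sum.inr (Sum.inl p)))] :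
    (DoubleSpider s [1,1] [1,1]).incidenceFinset (Sum.inr (Sum.inl p)) = {le' p.1} := by
  ext e
  rw [mem_incidence]
  simp only [Finset.mem_singleton]
  constructor
  · rintro ⟨⟨j, rfl⟩ | ⟨i, rfl⟩ | ⟨i, rfl⟩, hu⟩
    · rw [mem_ce] at hu
      rcases hu with hu | hu <;> simp at hu
    · rw [mem_le'] at hu
      rcases hu with hu | hu
      · simp at hu
      · injection hu with hu
        injection hu with hu
        rw [hu]
        rfl
    · rw [mem_re'] at hu
      rcases hu with hu | hu <;> simp at hu
  · rintro rfl
    exact ⟨Or.inr (Or.inl ⟨_, rfl⟩), by rw [mem_le']; right; rw [← leg_eq_lleaf p]⟩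

lemma inc_leafR [DecidableEq (DSV s)] (p : LegT)
    [Fintype ((DoubleSpider s [1,1] [1,1]).neighborSet (Sum.inr (Sum.inr p)))] :
    (DoubleSpider s [1,1] [1,1]).incidenceFinset (Sum.inr (Sum.inr p)) = {re' p.1} := by
  ext e
  rw [mem_incidence]
  simp only [Finset.mem_singleton]
  constructor
  · rintro ⟨⟨j, rfl⟩ | ⟨i, rfl⟩ | ⟨i, rfl⟩, hu⟩
    · rw [mem_ce] at hu
      rcases hu with hu | hu <;> simp at hu
    · rw [mem_le'] at hu
      rcases hu with hu | hu <;> simp at hu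
    · rw [mem_re'] at hu
      rcases hu with hu | hu
      · simp at hu
      · injection hu with hu
        injection hu with hu
        rw [hu]
        rfl
  · rintro rfl
    exact ⟨Or.inr (Or.inr ⟨_, rfl⟩), by rw [mem_re']; right; rw [← leg_eq_lleaf p]⟩


lemma vertexSum_explicit {V : Type*} [Fintype V] (G : SimpleGraph V) (f : Sym2 V → ℕ) (u : V)
    (inst : Fintype (G.neighborSet u)) (dec : DecidableEq V) :
    vertexSum G f u = ∑ e ∈ @SimpleGraph.incidenceFinset V G u inst dec, f e := by
  rw [vertexSum]
  congr 1
  congr!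

lemma degree_explicit {V : Type*} (G : SimpleGraph V) (u : V)
    (i1 i2 : Fintype (G.neighborSet u)) :
    @SimpleGraph.degree V G u i1 = @SimpleGraph.degree V G u i2 := by
  congr!

lemma clab_zero : clab s 0 = s/2 + 5 := by simp [clab]

lemma sum_v0 (hs : 0 < s) :
    vertexSum (DoubleSpider s [1,1] [1,1]) (flab s) (Sum.inl 0) = 3*(s/2) + 9 := by
  rw [vertexSum_explicit _ _ _ inferInstance inferInstance, inc_v0 hs]
  rw [Finset.sum_insert (by
        simp only [Finset.mem_insert, Finset.mem_singleton]
        push_neg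
        exact ⟨ce_ne_le' _ _, ce_ne_le' _ _⟩),
      Finset.sum_insert (by
        simp only [Finset.mem_singleton]
        intro h
        exact absurd (le'_inj h) (by decide)),
      Finset.sum_singleton]
  rw [flab_ce, flab_le', flab_le']
  have hv0 : ((0 : Fin 2) : ℕ) = 0 := rfl
  have hv1 : ((1 : Fin 2) : ℕ) = 1 := rfl
  simp only [hv0, hv1, Fin.val_mk, clab]
  split_ifs <;>
    first
      | exact absurd ‹False› id
      | exact absurd trivial ‹¬True›
      | omega

lemma sum_vlast (hs : 0 < s) :
    vertexSum (DoubleSpider s [1,1] [1,1]) (flab s) (Sum.inl (Fin.last s)) =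
      clab s (s-1) + (2*(s/2) + 6) := by
  rw [vertexSum_explicit _ _ _ inferInstance inferInstance, inc_vlast hs]
  rw [Finset.sum_insert (by
        simp only [Finset.mem_insert, Finset.mem_singleton]
        push_neg
        exact ⟨ce_ne_re' _ _, ce_ne_re' _ _⟩),
      Finset.sum_insert (by
        simp only [Finset.mem_singleton]
        intro h
        exact absurd (re'_inj h) (by decide)),
      Finset.sum_singleton]
  rw [flab_ce, flab_re', flab_re']
  have hv0 : ((0 : Fin 2) : ℕ) = 0 := rfl
  have hv1 : ((1 : Fin 2) : ℕ) = 1 := rfl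
  simp only [hv0, hv1, Fin.val_mk, clab]
  split_ifs <;>
    first
      | exact absurd ‹False› id
      | exact absurd trivial ‹¬True›
      | omega

lemma sum_mid (a : Fin (s+1)) (h0 : 0 < (a : ℕ)) (h1 : (a : ℕ) < s) :
    vertexSum (DoubleSpider s [1,1] [1,1]) (flab s) (Sum.inl a) = s/2 + 5 + (a : ℕ) := by
  rw [vertexSum_explicit _ _ _ inferInstance inferInstance, inc_mid a h0 h1]
  rw [Finset.sum_insert (by
        simp only [Finset.mem_singleton]
        intro h
        have := congrArg Fin.val (ce_inj h)
        simp at this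
        omega),
      Finset.sum_singleton]
  rw [flab_ce, flab_ce]
  have e1 : ((⟨(a:ℕ)-1, by omega⟩ : Fin s) : ℕ) = (a:ℕ) - 1 := rfl
  have e2 : ((⟨(a:ℕ), h1⟩ : Fin s) : ℕ) = (a:ℕ) := rfl
  rw [e1, e2]
  simp only [clab]
  split_ifs <;> omega

lemma sum_leafL (p : LegT) :
    vertexSum (DoubleSpider s [1,1] [1,1]) (flab s) (Sum.inr (Sum.inl p)) =
      if (p.1 : ℕ) = 0 then s/2+1 else s/2+3 := by
  rw [vertexSum_explicit _ _ _ inferInstance inferInstance, inc_leafL, Finset.sum_singleton, flab_le']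

lemma sum_leafR (p : LegT) :
    vertexSum (DoubleSpider s [1,1] [1,1]) (flab s) (Sum.inr (Sum.inr p)) =
      if (p.1 : ℕ) = 0 then s/2+2 else s/2+4 := by
  rw [vertexSum_explicit _ _ _ inferInstance inferInstance, inc_leafR, Finset.sum_singleton, flab_re']

-- degrees
lemma deg_v0 [DecidableEq (DSV s)] [Fintype ((DoubleSpider s [1,1] [1,1]).neighborSet (Sum.inl 0))] (hs : 0 < s) :
    (DoubleSpider s [1,1] [1,1]).degree (Sum.inl 0) = 3 := by
  rw [← SimpleGraph.card_incidenceFinset_eq_degree, inc_v0 hs]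
  rw [Finset.card_insert_of_notMem (by
        simp only [Finset.mem_insert, Finset.mem_singleton]
        push_neg
        exact ⟨ce_ne_le' _ _, ce_ne_le' _ _⟩),
      Finset.card_insert_of_notMem (by
        simp only [Finset.mem_singleton]
        intro h
        exact absurd (le'_inj h) (by decide)),
      Finset.card_singleton]

lemma deg_vlast [DecidableEq (DSV s)] [Fintype ((DoubleSpider s [1,1] [1,1]).neighborSet (Sum.inl (Fin.last s)))] (hs : 0 < s) :
    (DoubleSpider s [1,1] [1,1]).degree (Sum.inl (Fin.last s)) = 3 := by
  rw [← SimpleGraph.card_incidenceFinset_eq_degree, inc_vlast hs]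
  rw [Finset.card_insert_of_notMem (by
        simp only [Finset.mem_insert, Finset.mem_singleton]
        push_neg
        exact ⟨ce_ne_re' _ _, ce_ne_re' _ _⟩),
      Finset.card_insert_of_notMem (by
        simp only [Finset.mem_singleton]
        intro h
        exact absurd (re'_inj h) (by decide)),
      Finset.card_singleton]

lemma deg_mid [DecidableEq (DSV s)] (a : Fin (s+1))
    [Fintype ((DoubleSpider s [1,1] [1,1]).neighborSet (Sum.inl a))]
    (h0 : 0 < (a : ℕ)) (h1 : (a : ℕ) < s) :
    (DoubleSpider s [1,1] [1,1]).degree (Sum.inl a) = 2 := by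
  rw [← SimpleGraph.card_incidenceFinset_eq_degree, inc_mid a h0 h1]
  rw [Finset.card_insert_of_notMem (by
        simp only [Finset.mem_singleton]
        intro h
        have := congrArg Fin.val (ce_inj h)
        simp at this
        omega),
      Finset.card_singleton]

lemma deg_leafL [DecidableEq (DSV s)] (p : LegT)
    [Fintype ((DoubleSpider s [1,1] [1,1]).neighborSet (Sum.inr (Sum.inl p)))] :
    (DoubleSpider s [1,1] [1,1]).degree (Sum.inr (Sum.inl p)) = 1 := by
  rw [← SimpleGraph.card_incidenceFinset_eq_degree, inc_leafL, Finset.card_singleton]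

lemma deg_leafR [DecidableEq (DSV s)] (p : LegT)
    [Fintype ((DoubleSpider s [1,1] [1,1]).neighborSet (Sum.inr (Sum.inr p)))] :
    (DoubleSpider s [1,1] [1,1]).degree (Sum.inr (Sum.inr p)) = 1 := by
  rw [← SimpleGraph.card_incidenceFinset_eq_degree, inc_leafR, Finset.card_singleton]

lemma clab_last (hs : 0 < s) :
    clab s (s-1) = if s % 2 = 1 then 2*(s/2)+5 else s/2 := by
  simp only [clab]
  split_ifs <;> omega

def sumFun (s : ℕ) : DSV s → ℕ
  | Sum.inl a => if (a : ℕ) = 0 then 3*(s/2)+9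
      else if (a : ℕ) = s then clab s (s-1) + (2*(s/2)+6) else s/2+5+(a : ℕ)
  | Sum.inr (Sum.inl p) => if (p.1 : ℕ) = 0 then s/2+1 else s/2+3
  | Sum.inr (Sum.inr p) => if (p.1 : ℕ) = 0 then s/2+2 else s/2+4

def degFun (s : ℕ) : DSV s → ℕ
  | Sum.inl a => if (a : ℕ) = 0 ∨ (a : ℕ) = s then 3 else 2
  | Sum.inr _ => 1

lemma sum_all (hs : 0 < s) (u : DSV s) :
    vertexSum (DoubleSpider s [1,1] [1,1]) (flab s) u = sumFun s u := by
  rcases u with a | p | p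
  · rcases Nat.eq_zero_or_pos (a : ℕ) with h0 | h0
    · have ha : a = 0 := Fin.ext (by simpa using h0)
      subst ha
      rw [sum_v0 hs]
      simp [sumFun]
    · rcases eq_or_lt_of_le (Nat.lt_succ_iff.mp a.isLt) with hl | hl
      · have ha : a = Fin.last s := Fin.ext (by simpa [Fin.last] using hl)
        subst ha
        rw [sum_vlast hs]
        simp only [sumFun, Fin.val_last]
        rw [if_neg (by omega), if_pos trivial]
      · rw [sum_mid a h0 hl]
        simp only [sumFun]
        rw [if_neg (by omega), if_neg (by omega)]
  · rw [sum_leafL p]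
    simp [sumFun]
  · rw [sum_leafR p]
    simp [sumFun]

lemma deg_all (hs : 0 < s) (u : DSV s)
    (inst : Fintype ((DoubleSpider s [1,1] [1,1]).neighborSet u)) :
    @SimpleGraph.degree _ (DoubleSpider s [1,1] [1,1]) u inst = degFun s u := by
  rw [degree_explicit _ _ inst inferInstance]
  rcases u with a | p | p
  · rcases Nat.eq_zero_or_pos (a : ℕ) with h0 | h0
    · have ha : a = 0 := Fin.ext (by simpa using h0)
      subst ha
      rw [deg_v0 hs]
      simp [degFun]
    · rcases eq_or_lt_of_le (Nat.lt_succ_iff.mp a.isLt) with hl | hl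
      · have ha : a = Fin.last s := Fin.ext (by simpa [Fin.last] using hl)
        subst ha
        rw [deg_vlast hs]
        simp only [degFun, Fin.val_last]
        rw [if_pos (Or.inr trivial)]
      · rw [deg_mid a h0 hl]
        simp only [degFun]
        rw [if_neg (by omega)]
  · rw [deg_leafL p]
    simp [degFun]
  · rw [deg_leafR p]
    simp [degFun]

lemma sumFun_inj (hs : 0 < s) : Function.Injective (sumFun s) := by
  intro u v h
  rcases u with a | p | p <;> rcases v with b | q | q <;>
      simp only [sumFun] at h
  · have ha := a.isLt
    have hb := b.isLt
    rw [clab_last hs] at h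
    have : (a : ℕ) = (b : ℕ) := by split_ifs at h <;> omega
    exact congrArg Sum.inl (Fin.ext this)
  · exfalso
    have ha := a.isLt
    rw [clab_last hs] at h
    split_ifs at h <;> omega
  · exfalso
    have ha := a.isLt
    rw [clab_last hs] at h
    split_ifs at h <;> omega
  · exfalso
    have hb := b.isLt
    rw [clab_last hs] at h
    split_ifs at h <;> omega
  · have : p.1 = q.1 := by
      have h1 : (p.1 : ℕ) < 2 := p.1.isLt
      have h2 : (q.1 : ℕ) < 2 := q.1.isLt
      exact Fin.ext (by split_ifs at h <;> omega)
    exact congrArg _ (congrArg _ (leg_eq_of_fst this))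
  · exfalso
    split_ifs at h <;> omega
  · exfalso
    have hb := b.isLt
    rw [clab_last hs] at h
    split_ifs at h <;> omega
  · exfalso
    split_ifs at h <;> omega
  · have : p.1 = q.1 := by
      have h1 : (p.1 : ℕ) < 2 := p.1.isLt
      have h2 : (q.1 : ℕ) < 2 := q.1.isLt
      exact Fin.ext (by split_ifs at h <;> omega)
    exact congrArg _ (congrArg _ (leg_eq_of_fst this))

lemma sumFun_mono (hs : 0 < s) (u v : DSV s) (h : degFun s u < degFun s v) :
    sumFun s u < sumFun s v := by
  rcases u with a | p | p <;> rcases v with b | q | q <;>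
      simp only [sumFun, degFun] at h ⊢ <;>
      [skip; skip; skip; skip; skip; skip; skip; skip; skip] <;>
      first
        | (exfalso; split_ifs at h <;> omega)
        | (rw [clab_last hs]
           have ha := Fin.isLt a
           have hb := Fin.isLt b
           split_ifs at h ⊢ <;> omega)
        | (rw [clab_last hs]
           have hb := Fin.isLt b
           split_ifs at h ⊢ <;> omega)
        | (rw [clab_last hs]
           have ha := Fin.isLt a
           split_ifs at h ⊢ <;> omega)
        | (split_ifs at h ⊢ <;> omega)
        | (exfalso; omega)
        | omega

lemma clab_bounds {j : ℕ} (hj : j < s) : 1 ≤ clab s j ∧ clab s j ≤ s + 4 := by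
  simp only [clab]; split <;> omega

lemma clab_inj' {j j' : ℕ} (hj : j < s) (hj' : j' < s) (h : clab s j = clab s j') : j = j' := by
  simp only [clab] at h; split_ifs at h <;> omega

lemma clab_gap {j : ℕ} (hj : j < s) : clab s j ≤ s/2 ∨ s/2 + 5 ≤ clab s j := by
  simp only [clab]; split <;> omega

lemma card_EF : (EF s).card = s + 4 := by
  rw [EF]
  rw [Finset.card_union_of_disjoint (by
        simp only [Finset.disjoint_left, Finset.mem_union, Finset.mem_image, Finset.mem_univ,
          true_and]
        rintro e (⟨j, rfl⟩ | ⟨i, rfl⟩) ⟨i', h2⟩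
        · exact ce_ne_re' j i' h2.symm
        · exact le'_ne_re' i i' h2.symm),
      Finset.card_union_of_disjoint (by
        simp only [Finset.disjoint_left, Finset.mem_image, Finset.mem_univ, true_and]
        rintro e ⟨j, rfl⟩ ⟨i, h2⟩
        exact ce_ne_le' j i h2.symm)]
  rw [Finset.card_image_of_injective _ (fun a b hab => ce_inj hab),
      Finset.card_image_of_injective _ (fun a b hab => le'_inj hab),
      Finset.card_image_of_injective _ (fun a b hab => re'_inj hab)]
  simp

lemma mem_edgeSet_iff (e : Sym2 (DSV s)) :
    e ∈ (DoubleSpider s [1,1] [1,1]).edgeSet ↔ e ∈ EF s := by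
  rw [← SimpleGraph.mem_edgeFinset, edgeFinset_eq]

lemma edgeFinset_eq_all (inst : Fintype ((DoubleSpider s [1,1] [1,1]).edgeSet)) :
    @SimpleGraph.edgeFinset _ (DoubleSpider s [1,1] [1,1]) inst = EF s := by
  apply Finset.ext
  intro e
  rw [@SimpleGraph.mem_edgeFinset _ _ e inst]
  exact mem_edgeSet_iff e

-- value of flab on an edge of EF is in [1, s+4]
lemma flab_mem (e : Sym2 (DSV s)) (he : e ∈ EF s) : 1 ≤ flab s e ∧ flab s e ≤ s + 4 := by
  rw [mem_EF] at he
  have hv0 : ((0 : Fin 2) : ℕ) = 0 := rfl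
  have hv1 : ((1 : Fin 2) : ℕ) = 1 := rfl
  rcases he with ⟨j, rfl⟩ | ⟨i, rfl⟩ | ⟨i, rfl⟩
  · rw [flab_ce]; exact clab_bounds j.isLt
  · rw [flab_le']
    have : (s : ℕ)/2 + 4 ≤ s + 4 := by omega
    split_ifs <;> omega
  · rw [flab_re']
    split_ifs <;> omega

lemma flab_injOn_EF : ∀ e ∈ EF s, ∀ e' ∈ EF s, flab s e = flab s e' → e = e' := by
  intro e he e' he' h
  rw [mem_EF] at he he'
  have hv0 : ((0 : Fin 2) : ℕ) = 0 := rfl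
  have hv1 : ((1 : Fin 2) : ℕ) = 1 := rfl
  rcases he with ⟨j, rfl⟩ | ⟨i, rfl⟩ | ⟨i, rfl⟩ <;>
    rcases he' with ⟨j', rfl⟩ | ⟨i', rfl⟩ | ⟨i', rfl⟩
  · rw [flab_ce, flab_ce] at h
    exact congrArg ce (Fin.ext (clab_inj' j.isLt j'.isLt h))
  · exfalso
    rw [flab_ce, flab_le'] at h
    rcases clab_gap (s := s) j.isLt with hg | hg <;> split_ifs at h <;> omega
  · exfalso
    rw [flab_ce, flab_re'] at h
    rcases clab_gap (s := s) j.isLt with hg | hg <;> split_ifs at h <;> omega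
  · exfalso
    rw [flab_ce, flab_le'] at h
    rcases clab_gap (s := s) j'.isLt with hg | hg <;> split_ifs at h <;> omega
  · rw [flab_le', flab_le'] at h
    refine congrArg le' (Fin.ext ?_)
    have h1 : (i : ℕ) < 2 := i.isLt
    have h2 : (i' : ℕ) < 2 := i'.isLt
    split_ifs at h <;> omega
  · exfalso
    rw [flab_le', flab_re'] at h
    split_ifs at h <;> omega
  · exfalso
    rw [flab_ce, flab_re'] at h
    rcases clab_gap (s := s) j'.isLt with hg | hg <;> split_ifs at h <;> omega
  · exfalso
    rw [flab_le', flab_re'] at h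
    split_ifs at h <;> omega
  · rw [flab_re', flab_re'] at h
    refine congrArg re' (Fin.ext ?_)
    have h1 : (i : ℕ) < 2 := i.isLt
    have h2 : (i' : ℕ) < 2 := i'.isLt
    split_ifs at h <;> omega

lemma image_flab_EF : Finset.image (flab s) (EF s) = Finset.Icc 1 (s + 4) := by
  apply Finset.eq_of_subset_of_card_le
  · intro y hy
    rw [Finset.mem_image] at hy
    obtain ⟨e, he, rfl⟩ := hy
    rw [Finset.mem_Icc]
    exact flab_mem e he
  · rw [Nat.card_Icc, Finset.card_image_of_injOn (fun e he e' he' h => flab_injOn_EF e he e' he' h),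
      card_EF]
    omega

/-- For every integer `s ≥ 1`, the double spider whose set `L` consists
of two paths of length 1, whose set `R` consists of two paths of length 1, and whose core
path has length `s` (so both branch vertices have degree 3 and the tree has `s + 4` edges)
is strongly antimagic. -/
theorem doubleSpider_two_two_isStronglyAntimagic (s : ℕ) (hs : 1 ≤ s) :
    IsStronglyAntimagic (DoubleSpider s [1, 1] [1, 1]) := by
  refine ⟨flab s, ?_, ?_, ?_⟩
  · -- bijectivity of the labeling
    rw [edgeFinset_eq_all _, card_EF]
    refine ⟨?_, ?_, ?_⟩
    · intro e he
      rw [Set.mem_Icc]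
      exact flab_mem e ((mem_edgeSet_iff e).mp he)
    · intro e he e' he' h
      exact flab_injOn_EF e ((mem_edgeSet_iff e).mp he) e' ((mem_edgeSet_iff e').mp he') h
    · intro y hy
      rw [Set.mem_Icc] at hy
      have hmem : y ∈ Finset.image (flab s) (EF s) := by
        rw [image_flab_EF, Finset.mem_Icc]; exact hy
      rw [Finset.mem_image] at hmem
      obtain ⟨e, he, rfl⟩ := hmem
      exact ⟨e, (mem_edgeSet_iff e).mpr he, rfl⟩
  · -- injectivity of the vertex sums
    intro u v h
    rw [sum_all hs u, sum_all hs v] at h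
    exact sumFun_inj hs h
  · -- strong (degree-monotone) condition
    intro u v h
    rw [deg_all hs u _, deg_all hs v _] at h
    rw [sum_all hs u, sum_all hs v]
    exact sumFun_mono hs u v h

end
end
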